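/- arXiv:1710.09760 — 9 statements merged into one kernel-verified Lean document; each statement's English description precedes it below -/
import Mathlib

section
/- For every prime p and every positive integer n, the equation x^2 - ((2np)^2 - 1)·y^2 = p has no integer solutions. -/
theorem stmt_0 (p n : ℕ) (hp : p.Prime) (hn : 1 ≤ n) :
    ¬ ∃ x y : ℤ, x ^ 2 - ((2 * (n : ℤ) * p) ^ 2 - 1) * y ^ 2 = p := by
  rintro ⟨x, y, hxy⟩
  have hp2 : (2 : ℤ) ≤ (p : ℤ) := by exact_mod_cast hp.two_le
  have hn1 : (1 : ℤ) ≤ (n : ℤ) := by exact_mod_cast hn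
  set k : ℤ := 2 * (n : ℤ) * p with hkdef
  have hk4 : (4 : ℤ) ≤ k := by nlinarith
  have hpk : (p : ℤ) ≤ k := by nlinarith
  have key : ∀ b : ℕ, ∀ x y : ℤ, y.natAbs = b →
      x ^ 2 - (k ^ 2 - 1) * y ^ 2 = p → False := by
    intro b
    induction b using Nat.strong_induction_on with
    | _ b ih =>
      intro x y hb hxy
      rcases Nat.eq_zero_or_pos b with hb0 | hbpos
      · -- y = 0, so x^2 = p, impossible for prime
        have hy0 : y = 0 := Int.natAbs_eq_zero.mp (hb.trans hb0)
        subst hy0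
        have hx2 : (x.natAbs : ℤ) ^ 2 = (p : ℤ) := by
          rw [Int.natAbs_sq]; linarith [hxy]
        have hx2' : x.natAbs ^ 2 = p := by exact_mod_cast hx2
        have hdvd : x.natAbs ∣ p := ⟨x.natAbs, by rw [← hx2']; ring⟩
        rcases (Nat.Prime.eq_one_or_self_of_dvd hp _ hdvd) with h | h
        · rw [h] at hx2'; simp at hx2'; exact hp.one_lt.ne' hx2'.symm
        · rw [h] at hx2'
          have := hp.two_le
          nlinarith
      · -- descent
        have hy0 : y ≠ 0 := fun h => by simp [h] at hb; omega
        set a : ℤ := |x| with hadef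
        set c : ℤ := |y| with hcdef
        have ha0 : 0 ≤ a := abs_nonneg x
        have hc1 : 1 ≤ c := by
          rcases lt_or_ge 0 y with h | h
          · rw [hcdef, abs_of_pos h]; omega
          · have : y < 0 := lt_of_le_of_ne h hy0
            rw [hcdef, abs_of_neg this]; omega
        have habc : a ^ 2 - (k ^ 2 - 1) * c ^ 2 = p := by
          rw [hadef, hcdef, sq_abs, sq_abs]; exact hxy
        have hc2 : (1 : ℤ) ≤ c ^ 2 := by nlinarith
        have h1 : a < (k + 1) * c := by
          by_contra h
          push_neg at h
          have hsq : ((k + 1) * c) ^ 2 ≤ a ^ 2 :=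
            pow_le_pow_left₀ (by positivity) h 2
          nlinarith [mul_nonneg (by linarith : (0:ℤ) ≤ 2*k+2) (by linarith : (0:ℤ) ≤ c^2 - 1)]
        have h2 : (k - 1) * c < a := by
          by_contra h
          push_neg at h
          have hsq : a ^ 2 ≤ ((k - 1) * c) ^ 2 :=
            pow_le_pow_left₀ ha0 h 2
          nlinarith [mul_nonneg (by linarith : (0:ℤ) ≤ 2*k-2) (by linarith : (0:ℤ) ≤ c^2 - 1)]
        have hy'sq : (k * c - a) ^ 2 < c ^ 2 := by nlinarith
        have hnew : (k * a - (k ^ 2 - 1) * c) ^ 2 - (k ^ 2 - 1) * (k * c - a) ^ 2 = p := by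
          linear_combination habc
        have hlt : (k * c - a).natAbs < b := by
          have h1' : ((k * c - a).natAbs : ℤ) ^ 2 < (c.natAbs : ℤ) ^ 2 := by
            rw [Int.natAbs_sq, Int.natAbs_sq]; exact hy'sq
          have h2' : (k * c - a).natAbs ^ 2 < c.natAbs ^ 2 := by exact_mod_cast h1'
          have h3' : c.natAbs = b := by rw [hcdef, Int.natAbs_abs, hb]
          have := lt_of_pow_lt_pow_left₀ 2 (Nat.zero_le _) h2'
          omega
        exact ih _ hlt _ _ rfl hnew
  exact key y.natAbs x y rfl hxy
end

section
/- For every prime p and every positive integer n, the equation x^2 - ((2np)^2 - 1)·y^2 = -p has no integer solutions. -/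
lemma stmt_1_aux (p n : ℕ) (hp2 : (2:ℤ) ≤ p) (hn1 : (1:ℤ) ≤ n) :
    ∀ k : ℕ, ∀ x y : ℤ, 0 ≤ y → y.natAbs = k →
      x ^ 2 - ((2 * (n : ℤ) * p) ^ 2 - 1) * y ^ 2 ≠ -(p:ℤ) := by
  intro k
  induction k using Nat.strong_induction_on with
  | _ k IH =>
  intro x y hy hk h
  have ha : |x| ^ 2 = x ^ 2 := sq_abs x
  set a := |x| with hadef
  have hax : (0:ℤ) ≤ a := abs_nonneg x
  rw [← ha] at h
  have hy1 : 1 ≤ y := by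
    rcases lt_or_eq_of_le hy with h1 | h1
    · linarith
    · exfalso
      rw [← h1] at h
      nlinarith [sq_nonneg a]
  have ha1 : 1 ≤ a := by
    rcases lt_or_eq_of_le hax with h1 | h1
    · linarith
    · exfalso
      rw [← h1] at h
      have hnp : (p:ℤ) ≤ n * p := by nlinarith
      have hD : (p:ℤ) < (2 * n * p) ^ 2 - 1 := by
        nlinarith [mul_le_mul hnp hnp (by linarith) (by linarith),
          mul_le_mul hp2 (le_refl (p:ℤ)) (by linarith) (by linarith)]
      have hy2 : (1:ℤ) ≤ y ^ 2 := by nlinarith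
      nlinarith [mul_nonneg (by linarith : (0:ℤ) ≤ (2 * (n:ℤ) * p) ^ 2 - 1)
        (by linarith : (0:ℤ) ≤ y ^ 2 - 1)]
  have hmy : (0:ℤ) ≤ 2 * n * p * y := by positivity
  have hlt : a < 2 * n * p * y := by
    by_contra hc
    push_neg at hc
    nlinarith [mul_self_le_mul_self hmy hc, sq_nonneg y]
  have hgt : (2 * n * p - 1) * y < a := by
    by_contra hc
    push_neg at hc
    have h0 : (0:ℤ) ≤ (2 * n * p - 1) * y := by nlinarith
    nlinarith [mul_self_le_mul_self hax hc, mul_le_mul hn1 hp2 (by linarith) (by linarith)]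
  have hb' : 0 < 2 * n * p * y - a := by linarith
  have hb'2 : 2 * n * p * y - a < y := by linarith
  have heq : |2 * n * p * a - ((2 * (n : ℤ) * p) ^ 2 - 1) * y| ^ 2
      - ((2 * (n : ℤ) * p) ^ 2 - 1) * (2 * n * p * y - a) ^ 2 = -(p:ℤ) := by
    rw [sq_abs]
    linear_combination h
  exact IH (2 * n * p * y - a).natAbs
    (by rw [← hk]; exact Int.natAbs_lt_natAbs_of_nonneg_of_lt (le_of_lt hb') hb'2)
    _ _ (le_of_lt hb') rfl heq

theorem stmt_1 (p n : ℕ) (hp : p.Prime) (hn : 1 ≤ n) :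
    ¬ ∃ x y : ℤ, x ^ 2 - ((2 * (n : ℤ) * p) ^ 2 - 1) * y ^ 2 = -p := by
  rintro ⟨x, y, h⟩
  have hp2 : (2:ℤ) ≤ p := by exact_mod_cast hp.two_le
  have hn1 : (1:ℤ) ≤ n := by exact_mod_cast hn
  refine stmt_1_aux p n hp2 hn1 y.natAbs x |y| (abs_nonneg y) (Int.natAbs_abs y) ?_
  rw [sq_abs]
  exact h
end

section
/- For every prime p and every positive integer n divisible by 3, the equation x^2 - ((2np)^2 + 3)·y^2 = p has no integer solutions. -/
theorem stmt_2 (p n : ℕ) (hp : p.Prime) (hn : 1 ≤ n) (h3 : 3 ∣ n) :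
    ¬ ∃ x y : ℤ, x ^ 2 - ((2 * (n : ℤ) * p) ^ 2 + 3) * y ^ 2 = p := by
  obtain ⟨t, ht⟩ := h3
  have htn : 1 ≤ t := by omega
  have hp2 : (2:ℤ) ≤ (p:ℤ) := by exact_mod_cast hp.two_le
  have ht1 : (1:ℤ) ≤ (t:ℤ) := by exact_mod_cast htn
  obtain ⟨K, hK⟩ : ∃ K : ℤ, K = 2 * (t:ℤ) * (p:ℤ) := ⟨_, rfl⟩
  have hK2p : 2 * (p:ℤ) ≤ K := by
    rw [hK]; nlinarith [mul_nonneg (by linarith : (0:ℤ) ≤ (t:ℤ) - 1) (by linarith : (0:ℤ) ≤ (p:ℤ))]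
  have hK1 : (2:ℤ) ≤ K := by linarith
  have hD : (2 * (n : ℤ) * (p:ℤ)) ^ 2 + 3 = 9 * K^2 + 3 := by
    rw [hK, ht]; push_cast; ring
  rintro ⟨x, y, hxy⟩
  rw [hD] at hxy
  have key : ∀ Y : ℕ, ∀ x : ℤ, x ^ 2 - (9 * K^2 + 3) * (Y:ℤ) ^ 2 ≠ (p:ℤ) := by
    intro Y
    induction Y using Nat.strong_induction_on with
    | _ Y IH =>
      intro x hx
      have hX : |x| ^ 2 - (9 * K^2 + 3) * (Y:ℤ) ^ 2 = (p:ℤ) := by rw [sq_abs]; exact hx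
      obtain ⟨X, hXdef⟩ : ∃ X : ℤ, X = |x| := ⟨_, rfl⟩
      rw [← hXdef] at hX
      have hX0 : 0 ≤ X := hXdef ▸ abs_nonneg x
      rcases Nat.eq_zero_or_pos Y with hY0 | hY1
      · subst hY0
        simp at hX
        have h2 : ((X.natAbs * X.natAbs : ℕ) : ℤ) = (p:ℤ) := by
          rw [Int.natAbs_mul_self]; linear_combination hX
        have hsq : X.natAbs * X.natAbs = p := by exact_mod_cast h2
        rcases hp.eq_one_or_self_of_dvd X.natAbs ⟨X.natAbs, hsq.symm⟩ with h1 | h1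
        · rw [h1] at hsq; omega
        · rw [h1] at hsq; nlinarith [hp.two_le]
      · have hY1' : (1:ℤ) ≤ (Y:ℤ) := by exact_mod_cast hY1
        have hXgt : 3 * K * (Y:ℤ) < X := by
          nlinarith [hX, hX0, hp2, mul_pos (show (0:ℤ) < K by linarith)
            (show (0:ℤ) < (Y:ℤ) by linarith), sq_nonneg (X + 3*K*(Y:ℤ))]
        obtain ⟨a, hadef⟩ : ∃ a : ℤ, a = X - 3 * K * (Y:ℤ) := ⟨_, rfl⟩
        have ha1 : 1 ≤ a := by
          rw [hadef]; linarith [Int.lt_iff_add_one_le.mp hXgt]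
        have hpid : (p:ℤ) = a^2 + 6*K*a*(Y:ℤ) - 3*(Y:ℤ)^2 := by
          rw [hadef]; linear_combination -hX
        rcases lt_trichotomy (2*K*a - (Y:ℤ)) 0 with hr | hr | hr
        · -- descent
          obtain ⟨X', hX'def⟩ : ∃ z : ℤ, z = X + 6*K*(K*a - (Y:ℤ)) := ⟨_, rfl⟩
          obtain ⟨Y', hY'def⟩ : ∃ z : ℤ, z = (Y:ℤ) - 2*K*a := ⟨_, rfl⟩
          have hY'1 : (1:ℤ) ≤ Y' := by
            rw [hY'def]; linarith [Int.lt_iff_add_one_le.mp hr]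
          have hY'lt : Y' < (Y:ℤ) := by
            have : (0:ℤ) < K*a := mul_pos (by linarith) (by linarith)
            rw [hY'def]; linarith
          have hnew : X'^2 - (9*K^2+3)*Y'^2 = (p:ℤ) := by
            rw [hX'def, hY'def, hadef]; linear_combination hX
          have hYn : (Y'.toNat : ℤ) = Y' := Int.toNat_of_nonneg (by linarith)
          have hlt : Y'.toNat < Y := by
            have : (Y'.toNat : ℤ) < (Y:ℤ) := by rw [hYn]; exact hY'lt
            exact_mod_cast this
          exact IH Y'.toNat hlt X' (by rw [hYn]; linear_combination hnew)
        · -- p = a^2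
          have hpa : (p:ℤ) = a^2 := by linear_combination hpid + 3*(Y:ℤ)*hr
          have h2 : ((a.natAbs * a.natAbs : ℕ) : ℤ) = (p:ℤ) := by
            rw [Int.natAbs_mul_self]; linear_combination -hpa
          have hsq : a.natAbs * a.natAbs = p := by exact_mod_cast h2
          rcases hp.eq_one_or_self_of_dvd a.natAbs ⟨a.natAbs, hsq.symm⟩ with h1 | h1
          · rw [h1] at hsq; omega
          · rw [h1] at hsq; nlinarith [hp.two_le]
        · -- p too big
          have hr1 : (1:ℤ) ≤ 2*K*a - (Y:ℤ) := Int.lt_iff_add_one_le.mp hr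
          have hm1 : 0 ≤ ((Y:ℤ) - 1) * (2*K*a - (Y:ℤ) - 1) :=
            mul_nonneg (by linarith) (by linarith)
          have hm2 : 0 ≤ (a - 1) * K := mul_nonneg (by linarith) (by linarith)
          have hm3 : 0 ≤ (a - 1) * a := mul_nonneg (by linarith) (by linarith)
          linarith [hpid, hm1, hm2, hm3, hK2p, hp2]
  have hcast : ((y.natAbs : ℤ))^2 = y^2 := by
    rw [← Int.abs_eq_natAbs, sq_abs]
  exact key y.natAbs x (by rw [hcast]; exact hxy)
end

section
/- For every prime p and every positive integer n, the equation x^2 - (((2n+1)p)^2 + 2)·y^2 = p has no integer solutions. -/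
set_option maxHeartbeats 1000000

theorem stmt_4 (p n : ℕ) (hp : p.Prime) (hn : 1 ≤ n) :
    ¬ ∃ x y : ℤ, x ^ 2 - (((2 * (n : ℤ) + 1) * p) ^ 2 + 2) * y ^ 2 = p := by
  classical
  rintro ⟨x, y, hxy⟩
  have hp2 : (2:ℤ) ≤ (p:ℤ) := by exact_mod_cast hp.two_le
  set k : ℤ := (2 * (n:ℤ) + 1) * p with hk
  have hn1 : (1:ℤ) ≤ (n:ℤ) := by exact_mod_cast hn
  have hk3 : 3 * (p:ℤ) ≤ k := by rw [hk]; nlinarith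
  have hkpos : 0 < k := by linarith
  have hsq : ∀ z : ℤ, ((z.natAbs : ℤ))^2 = z^2 := by
    intro z; rw [← Int.abs_eq_natAbs, sq_abs]
  have hne : ∃ b : ℕ, ∃ a : ℤ, a ^ 2 - (k^2+2) * (b:ℤ) ^ 2 = (p:ℤ) :=
    ⟨y.natAbs, x, by rw [hsq]; exact hxy⟩
  set c : ℕ := Nat.find hne with hc
  obtain ⟨a0, ha0⟩ := Nat.find_spec hne
  set a : ℤ := (a0.natAbs : ℤ) with hadef
  have ha : a ^ 2 - (k^2+2) * (c:ℤ) ^ 2 = (p:ℤ) := by rw [hadef, hsq]; exact ha0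
  have hann : (0:ℤ) ≤ a := Int.natCast_nonneg _
  -- c ≥ 1
  have hc1 : 1 ≤ c := by
    by_contra h
    have hc0 : c = 0 := by omega
    rw [hc0] at ha
    simp at ha
    have hnat : a0.natAbs * a0.natAbs = p := by
      have h' : ((a0.natAbs : ℤ)) * ((a0.natAbs : ℤ)) = (p:ℤ) := by
        rw [← hadef]; nlinarith [ha]
      exact_mod_cast h'
    have hd : a0.natAbs ∣ p := Dvd.intro _ hnat
    rcases (Nat.Prime.eq_one_or_self_of_dvd hp _ hd) with h1 | h1 <;>
      · rw [h1] at hnat; nlinarith [hp.two_le, hnat]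
  have hc1' : (1:ℤ) ≤ (c:ℤ) := by exact_mod_cast hc1
  -- a > k*c
  have hakc : k * (c:ℤ) < a := by nlinarith [ha, sq_nonneg (a - k*c), sq_nonneg (a + k*c)]
  -- descent step: (k^2+1)*c - k*a is another y-value
  set b' : ℤ := (k^2+1)*(c:ℤ) - k*a with hb'
  have hb'eq : ((k^2+1)*a - (k^2+2)*k*(c:ℤ)) ^ 2 - (k^2+2) * b' ^ 2 = (p:ℤ) := by
    rw [hb']; linear_combination ((k^2+1)^2 - (k^2+2)*k^2) * ha
  have hPb' : ∃ a' : ℤ, a' ^ 2 - (k^2+2) * ((b'.natAbs : ℤ)) ^ 2 = (p:ℤ) :=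
    ⟨(k^2+1)*a - (k^2+2)*k*(c:ℤ), by rw [hsq]; exact hb'eq⟩
  have hmin : c ≤ b'.natAbs := by
    by_contra h
    exact Nat.find_min hne (by omega) hPb'
  have hb'lt : b' < (c:ℤ) := by rw [hb']; nlinarith
  -- so b' ≤ -c
  have hb'neg : b' ≤ -(c:ℤ) := by
    rcases le_or_gt 0 b' with h | h
    · exfalso
      have : (b'.natAbs : ℤ) = b' := by
        rw [← Int.abs_eq_natAbs]; exact abs_of_nonneg h
      have : (c:ℤ) ≤ b' := by rw [← this]; exact_mod_cast hmin
      linarith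
    · have : (b'.natAbs : ℤ) = -b' := by
        rw [← Int.abs_eq_natAbs]; exact abs_of_neg h
      have h2 : (c:ℤ) ≤ -b' := by rw [← this]; exact_mod_cast hmin
      linarith
  -- hence (k^2+2)*c ≤ k*a
  have h1 : (k^2+2) * (c:ℤ) ≤ k * a := by rw [hb'] at hb'neg; linarith
  -- square it: 2*(k^2+2)*c^2 ≤ k^2*p
  have h1nn : (0:ℤ) ≤ (k^2+2) * (c:ℤ) := by positivity
  have hsqle := mul_self_le_mul_self h1nn h1
  have h3 : k^2 * a^2 = k^2 * (p:ℤ) + k^2*(k^2+2)*(c:ℤ)^2 := by linear_combination k^2 * ha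
  have h2 : 2*(k^2+2)*(c:ℤ)^2 ≤ k^2 * (p:ℤ) := by nlinarith [hsqle, h3]
  -- so 2c^2 < p
  have hB : 2*(c:ℤ)^2 < (p:ℤ) := by nlinarith [h2, sq_nonneg k, hc1']
  -- final contradiction with r = a - k*c ≥ 1
  set r : ℤ := a - k*(c:ℤ) with hr
  have hr1 : 1 ≤ r := by rw [hr]; linarith
  have hpe : (p:ℤ) = 2*k*(c:ℤ)*r + r^2 - 2*(c:ℤ)^2 := by
    rw [hr]; linear_combination -ha
  have h5 : k ≤ k*(c:ℤ)*r := by nlinarith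
  have hr2 : (1:ℤ) ≤ r^2 := one_le_pow₀ hr1
  linarith [hpe, h5, hr2, hB, hk3, hp2]
end

section
/- For every prime p with p ≠ 3 and every positive integer n, the equation x^2 - (((2n+1)p)^2 - 2)·y^2 = -p has no integer solutions. -/
lemma descent_aux (p k : ℤ) (hp : 2 ≤ p) (hk : 3 * p ≤ k) :
    ∀ N : ℕ, ∀ x y : ℤ, 0 ≤ x → 1 ≤ y → y ≤ (N : ℤ) →
      x ^ 2 - (k ^ 2 - 2) * y ^ 2 = -p → False := by
  intro N
  induction N with
  | zero =>
    intro x y _ hy hyN _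
    norm_num at hyN
    linarith
  | succ N ih =>
    intro x y hx hy hyN heq
    have hkpos : (6 : ℤ) ≤ k := by linarith
    by_cases hsmall : y ^ 2 < 2 * p
    · -- squeeze: (k*y - 1)^2 < x^2 < (k*y)^2
      have hx2 : x ^ 2 = (k ^ 2 - 2) * y ^ 2 - p := by linarith
      have h1 : x < k * y := by
        have hsq : x ^ 2 < (k * y) ^ 2 := by nlinarith [sq_nonneg y]
        exact lt_of_pow_lt_pow_left₀ 2 (by positivity : (0:ℤ) ≤ k * y) hsq
      have h2 : k * y - 1 < x := by
        nlinarith [sq_nonneg (x - (k * y - 1)), mul_pos (by linarith : (0:ℤ) < y)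
          (by nlinarith : (0:ℤ) < 3 * p - y)]
      linarith [Int.add_one_le_of_lt h2]
    · push_neg at hsmall
      set x' := x * (k ^ 2 - 1) - (k ^ 2 - 2) * y * k with hx'def
      set y' := y * (k ^ 2 - 1) - x * k with hy'def
      have heq' : x' ^ 2 - (k ^ 2 - 2) * y' ^ 2 = -p := by
        rw [hx'def, hy'def]; linear_combination heq
      have hfac : y' * (y * (k ^ 2 - 1) + x * k) = y ^ 2 + k ^ 2 * p := by
        rw [hy'def]; linear_combination (-(k ^ 2)) * heq
      have hA : 0 < y * (k ^ 2 - 1) + x * k := by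
        have t1 : (1:ℤ) * (k ^ 2 - 1) ≤ y * (k ^ 2 - 1) :=
          mul_le_mul_of_nonneg_right hy (by nlinarith)
        have t2 : (0:ℤ) ≤ x * k := mul_nonneg hx (by linarith)
        nlinarith
      have hy'pos : 1 ≤ y' := by nlinarith
      have hy'lt : y' < y := by
        have h5 : y' * (y * (k ^ 2 - 1) + x * k) < y * (y * (k ^ 2 - 1) + x * k) := by
          rw [hfac]
          have t1 : 2 * p * (k ^ 2 - 2) ≤ y ^ 2 * (k ^ 2 - 2) :=
            mul_le_mul_of_nonneg_right hsmall (by nlinarith)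
          have t2 : (0:ℤ) ≤ x * k * y := by positivity
          have t3 : 2 * 36 ≤ p * k ^ 2 := by nlinarith
          nlinarith
        exact lt_of_mul_lt_mul_right h5 (le_of_lt hA)
      have hy'N : y' ≤ (N : ℤ) := by push_cast at hyN ⊢; linarith
      exact ih |x'| y' (abs_nonneg _) hy'pos hy'N (by rw [sq_abs]; exact heq')

theorem stmt_7 (p n : ℕ) (hp : p.Prime) (hp3 : p ≠ 3) (hn : 1 ≤ n) :
    ¬ ∃ x y : ℤ, x ^ 2 - (((2 * (n : ℤ) + 1) * p) ^ 2 - 2) * y ^ 2 = -p := by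
  rintro ⟨x, y, h⟩
  have hp2 : (2 : ℤ) ≤ (p : ℤ) := by exact_mod_cast hp.two_le
  set k : ℤ := (2 * (n : ℤ) + 1) * (p : ℤ) with hkdef
  have hk : 3 * (p : ℤ) ≤ k := by
    have hn' : (1 : ℤ) ≤ (n : ℤ) := by exact_mod_cast hn
    rw [hkdef]; nlinarith
  by_cases hy0 : y = 0
  · rw [hy0] at h
    nlinarith [sq_nonneg x]
  · have hy1 : 1 ≤ |y| := by
      rcases abs_pos.mpr hy0 with h'
      omega
    have habs : |x| ^ 2 - (k ^ 2 - 2) * |y| ^ 2 = -p := by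
      rw [sq_abs, sq_abs]; exact h
    exact descent_aux (p : ℤ) k hp2 hk y.natAbs |x| |y| (abs_nonneg _) hy1
      (by rw [Int.abs_eq_natAbs]) habs
end

section
/- If p is a prime with p ≡ 1 (mod 4), n ≥ 1 is an integer, and m = (2np)^2 - 1 is square-free, then the class number of the real quadratic field Q(√m) is greater than 1. -/
open IntermediateField NumberField Polynomial
set_option maxHeartbeats 1000000
set_option synthInstance.maxHeartbeats 400000


private lemma prime_not_sq (p : ℕ) (hp : p.Prime) : ∀ a : ℤ, a^2 ≠ (p:ℤ) := by
  intro a ha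
  have h : a.natAbs ^ 2 = p := by
    have := congrArg Int.natAbs ha
    simpa [Int.natAbs_pow] using this
  have hdvd : a.natAbs ∣ p := ⟨a.natAbs, by rw [← h]; ring⟩
  have h2 := hp.two_le
  rcases hp.eq_one_or_self_of_dvd a.natAbs hdvd with h1 | h1 <;> rw [h1] at h <;> nlinarith

private lemma keyA (p k : ℤ) (hp2 : 2 ≤ p) (hsq : ∀ a : ℤ, a^2 ≠ p) (hk : p < 2*k - 2) :
    ∀ N : ℕ, ∀ b a : ℤ, b.natAbs ≤ N →
      (a^2 - (k^2-1)*b^2 = p ∨ a^2 - (k^2-1)*b^2 = -p) → False := by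
  intro N
  induction N with
  | zero =>
    intro b a hb hc
    have hb0 : b = 0 := by omega
    subst hb0
    rcases hc with hc | hc
    · exact hsq a (by linarith [hc])
    · nlinarith [sq_nonneg a]
  | succ N ih =>
    intro b a hb hc
    rcases Nat.lt_or_ge b.natAbs (N+1) with h | h
    · exact ih b a (by omega) hc
    have hbN : b.natAbs = N + 1 := le_antisymm hb h
    have hb0 : b ≠ 0 := by
      intro h0; rw [h0] at hbN; simp at hbN
    set A : ℤ := |a| with hA
    set B : ℤ := |b| with hB
    have hA2 : A^2 = a^2 := sq_abs a
    have hB2 : B^2 = b^2 := sq_abs b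
    have hAnn : 0 ≤ A := abs_nonneg a
    have hBpos : 0 < B := abs_pos.mpr hb0
    have hB1 : 1 ≤ B^2 := by nlinarith
    have hk3 : 3 ≤ k := by omega
    have hc' : A^2 - (k^2-1)*B^2 = p ∨ A^2 - (k^2-1)*B^2 = -p := by
      rw [hA2, hB2]; exact hc
    have hub : ((k-1)*B)^2 < A^2 := by
      rcases hc' with hc' | hc' <;> nlinarith
    have hlb : A^2 < ((k+1)*B)^2 := by
      rcases hc' with hc' | hc' <;> nlinarith
    have hkB1 : 0 ≤ (k-1)*B := mul_nonneg (by linarith) hBpos.le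
    have hkB2 : 0 < (k+1)*B := mul_pos (by linarith) hBpos
    have hub' : (k-1)*B < A := by
      by_contra hcon
      push_neg at hcon
      nlinarith [mul_le_mul hcon hcon hAnn hkB1]
    have hlb' : A < (k+1)*B := by
      by_contra hcon
      push_neg at hcon
      nlinarith [mul_le_mul hcon hcon hkB2.le hAnn]
    set b' : ℤ := k*B - A with hb'
    set a' : ℤ := k*A - (k^2-1)*B with ha'
    have hkey : a'^2 - (k^2-1)*b'^2 = A^2 - (k^2-1)*B^2 := by rw [ha', hb']; ring
    have hnb : b'.natAbs < b.natAbs := by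
      have h1 : |b'| < B := abs_lt.mpr ⟨by linarith, by linarith⟩
    -- B = |b| = b.natAbs
      have h2 : (b'.natAbs : ℤ) < (b.natAbs : ℤ) := by
        rw [← Int.abs_eq_natAbs, ← Int.abs_eq_natAbs]
        exact lt_of_lt_of_le h1 (le_of_eq (hB.symm ▸ rfl))
      exact_mod_cast h2
    exact ih b' a' (by omega) (by rw [hkey]; exact hc')

private lemma keyB (p k m : ℤ) (hp2 : 2 ≤ p) (hsq : ∀ a : ℤ, a^2 ≠ p)
    (hm : m = k^2 - 1) (hm4 : m % 4 = 3) (hk : p < 2*k - 2) :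
    ∀ a b : ℤ, (a^2 - m*b^2 = 4*p ∨ a^2 - m*b^2 = -(4*p)) → False := by
  intro a b hc
  rcases Int.even_or_odd a with ⟨x, hx⟩ | ⟨x, hx⟩ <;>
    rcases Int.even_or_odd b with ⟨y, hy⟩ | ⟨y, hy⟩
  · -- both even
    have h4 : a^2 - m*b^2 = 4*(x^2 - m*y^2) := by rw [hx, hy]; ring
    have : x^2 - m*y^2 = p ∨ x^2 - m*y^2 = -p := by
      rw [h4] at hc; rcases hc with hc | hc
      · left; linarith
      · right; linarith
    exact keyA p k hp2 hsq hk y.natAbs y x le_rfl (by rw [← hm]; exact this)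
  · -- a even, b odd
    have h4 : a^2 - m*b^2 = 4*(x^2) - 4*(m*(y^2+y)) - m := by rw [hx, hy]; ring
    rw [h4] at hc
    set X := x^2; set W := m*(y^2+y)
    omega
  · -- a odd, b even
    have h4 : a^2 - m*b^2 = 4*(x^2+x) + 1 - 4*(m*y^2) := by rw [hx, hy]; ring
    rw [h4] at hc
    set X := x^2+x; set W := m*y^2
    omega
  · -- both odd
    have h4 : a^2 - m*b^2 = 4*(x^2+x) + 1 - 4*(m*(y^2+y)) - m := by rw [hx, hy]; ring
    rw [h4] at hc
    set X := x^2+x; set W := m*(y^2+y)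
    omega

private lemma den_one_of_sf (m : ℕ) (hsf : Squarefree m) (x : ℚ) (c : ℤ)
    (h : (m:ℚ) * x^2 = (c:ℚ)) : ∃ b : ℤ, x = (b:ℚ) := by
  have hd0 : ((x.den:ℚ)) ≠ 0 := by exact_mod_cast x.den_nz
  have h2 : (m:ℚ) * ((x.num:ℚ)/(x.den:ℚ))^2 = (c:ℚ) := by rw [Rat.num_div_den]; exact h
  field_simp at h2
  have hnum : (m:ℤ) * x.num^2 = c * (x.den:ℤ)^2 := by rw [mul_comm c]; exact_mod_cast h2
  have hdvd : ((x.den:ℤ))^2 ∣ (m:ℤ) * x.num^2 := ⟨c, by rw [hnum]; ring⟩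
  have hdn : x.den^2 ∣ m * x.num.natAbs^2 := by
    have h3 := Int.natAbs_dvd_natAbs.mpr hdvd
    simpa [Int.natAbs_mul, Int.natAbs_pow] using h3
  have hcop : (x.den^2).Coprime (x.num.natAbs^2) := Nat.Coprime.pow _ _ x.reduced.symm
  have hdm : x.den^2 ∣ m := hcop.dvd_of_dvd_mul_right hdn
  have hu : IsUnit x.den := hsf x.den (by rwa [← sq])
  have hden1 : x.den = 1 := Nat.isUnit_iff.mp hu
  refine ⟨x.num, ?_⟩
  rw [← Rat.num_div_den x, hden1]; simp

private lemma rat_int_of_integral {y : ℚ} (hy : IsIntegral ℤ y) : ∃ z : ℤ, (z:ℚ) = y := by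
  obtain ⟨z, hz⟩ := IsIntegrallyClosed.isIntegral_iff.mp hy
  exact ⟨z, by exact_mod_cast hz⟩



private lemma hm4_aux (n p : ℕ) (hn : 1 ≤ n) (hp2 : 2 ≤ p) (m : ℕ)
    (hm : (m : ℤ) = (2 * (n : ℤ) * p) ^ 2 - 1) :
    (m:ℤ) % 4 = 3 ∧ (p:ℤ) < 2*(2*(n:ℤ)*p) - 2 := by
  have hn1 : (1:ℤ) ≤ n := by exact_mod_cast hn
  have hpz : (2:ℤ) ≤ p := by exact_mod_cast hp2
  constructor
  · have hmz : (m:ℤ) = 4*((n:ℤ)^2*(p:ℤ)^2) - 1 := by rw [hm]; ring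
    have hW : 1 ≤ (n:ℤ)^2*(p:ℤ)^2 := by nlinarith
    set W := (n:ℤ)^2*(p:ℤ)^2
    omega
  · nlinarith

private lemma quad_formula {K : Type*} [Field K] [Algebra ℚ K] [FiniteDimensional ℚ K]
    (B : Module.Basis (Fin 2) ℚ K) (g : K) (μ : ℚ)
    (hB0 : B 0 = 1) (hB1 : B 1 = g) (hg : g * g = algebraMap ℚ K μ) (x : K) :
    Algebra.norm ℚ x = (B.repr x 0)^2 - μ * (B.repr x 1)^2 ∧
      Algebra.trace ℚ K x = 2 * (B.repr x 0) := by
  set q := B.repr x 0 with hq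
  set r := B.repr x 1 with hr
  have hx : x = q • B 0 + r • B 1 := by
    have h := B.sum_repr x
    rw [Fin.sum_univ_two] at h
    exact h.symm
  have hxg : x * B 1 = (μ * r) • B 0 + q • B 1 := by
    rw [hB0, hB1]
    conv_lhs => rw [hx, hB0, hB1]
    rw [add_mul, smul_mul_assoc, one_mul, smul_mul_assoc, hg,
      Algebra.algebraMap_eq_smul_one, smul_smul]
    rw [mul_comm r μ]
    abel
  have hx0 : x * B 0 = x := by rw [hB0, mul_one]
  have e0 : ∀ i, B.repr (x * B 0) i = B.repr x i := fun i => by rw [hx0]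
  have e1 : B.repr (x * B 1) 0 = μ * r ∧ B.repr (x * B 1) 1 = q := by
    rw [hxg]
    simp [Finsupp.single_apply]
  constructor
  · rw [Algebra.norm_eq_matrix_det B, Matrix.det_fin_two]
    simp only [Algebra.leftMulMatrix_eq_repr_mul]
    rw [e0 0, e0 1, e1.1, e1.2, ← hq, ← hr]
    ring
  · rw [Algebra.trace_eq_matrix_trace B, Matrix.trace_fin_two]
    simp only [Algebra.leftMulMatrix_eq_repr_mul]
    rw [e0 0, e1.2, ← hq]
    ring

theorem stmt_10 (p n : ℕ) (hp : p.Prime) (hp4 : p % 4 = 1) (hn : 1 ≤ n)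
    (m : ℕ) (hm : (m : ℤ) = (2 * (n : ℤ) * p) ^ 2 - 1) (hsf : Squarefree m)
    (K : IntermediateField ℚ ℝ) (hK : K = ℚ⟮Real.sqrt m⟯) [NumberField K] :
    1 < NumberField.classNumber K := by
  subst hK
  by_contra hlt
  set θ : ℝ := Real.sqrt m with hθdef
  have hp2 : 2 ≤ p := hp.two_le
  have hn1 : (1:ℤ) ≤ n := by exact_mod_cast hn
  have hpz : (2:ℤ) ≤ p := by exact_mod_cast hp2
  have h4np : (4:ℤ) ≤ 2*(n:ℤ)*p := by nlinarith
  have hm15 : (15:ℤ) ≤ (m:ℤ) := by rw [hm]; nlinarith [h4np]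
  have hmN : 15 ≤ m := by exact_mod_cast hm15
  have hm0 : (0:ℝ) ≤ (m:ℝ) := by positivity
  have hθ2 : θ^2 = (m:ℝ) := Real.sq_sqrt hm0
  have hnsq : ¬ IsSquare m := by
    rintro ⟨t, ht⟩
    have hu : IsUnit t := hsf t (by rw [← ht])
    rw [Nat.isUnit_iff.mp hu] at ht
    omega
  have hirr : Irrational θ := irrational_sqrt_natCast_iff.mpr hnsq
  have haev : (Polynomial.aeval θ) (X^2 - C (m:ℚ)) = 0 := by
    rw [map_sub, map_pow, Polynomial.aeval_X, Polynomial.aeval_C]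
    rw [show (algebraMap ℚ ℝ) ((m:ℚ)) = (m:ℝ) by push_cast; norm_num, hθ2]
    ring
  have hint : IsIntegral ℚ θ :=
    ⟨X^2 - C (m:ℚ), Polynomial.monic_X_pow_sub_C _ (by norm_num), by
      simpa using haev⟩
  have hdeg : (minpoly ℚ θ).natDegree = 2 := by
    have hdvd : minpoly ℚ θ ∣ (X^2 - C (m:ℚ)) := minpoly.dvd ℚ θ haev
    have hle : (minpoly ℚ θ).natDegree ≤ 2 := by
      have := Polynomial.natDegree_le_of_dvd hdvd
        (Polynomial.X_pow_sub_C_ne_zero (by norm_num) _)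
      rwa [Polynomial.natDegree_X_pow_sub_C] at this
    have h1 : (minpoly ℚ θ).natDegree ≠ 1 := by
      intro h
      obtain ⟨y, hy⟩ := minpoly.natDegree_eq_one_iff.mp h
      exact hirr ⟨y, by rw [← hy, eq_ratCast]⟩
    have h0 : 0 < (minpoly ℚ θ).natDegree := minpoly.natDegree_pos hint
    omega
  -- power basis
  set pb := IntermediateField.adjoin.powerBasis hint with hpbdef
  have hdim : pb.dim = 2 := by
    rw [hpbdef, IntermediateField.adjoin.powerBasis_dim]; exact hdeg
  set B := pb.basis.reindex (finCongr hdim) with hBdef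
  set g : ℚ⟮θ⟯ := pb.gen with hgdef
  have hBi : ∀ i : Fin 2, B i = g ^ (i:ℕ) := by
    intro i
    rw [hBdef, Module.Basis.reindex_apply, PowerBasis.coe_basis]
    congr 1
  have hB0 : B 0 = 1 := by rw [hBi 0]; norm_num
  have hB1 : B 1 = g := by rw [hBi 1]; norm_num
  have hgc : (g : ℝ) = θ := by
    rw [hgdef, hpbdef, IntermediateField.adjoin.powerBasis_gen]
    exact IntermediateField.AdjoinSimple.coe_gen ℚ θ
  have hfr : Module.finrank ℚ ℚ⟮θ⟯ = 2 := by rw [pb.finrank, hdim]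
  have hg2 : g * g = algebraMap ℚ ℚ⟮θ⟯ ((m:ℚ)) := by
    apply Subtype.ext
    push_cast [hgc]
    rw [← hθ2]; ring
  have hmKcast : ((m : ℕ) : ℚ⟮θ⟯) = algebraMap ℚ ℚ⟮θ⟯ (m:ℚ) :=
    (map_natCast (algebraMap ℚ ℚ⟮θ⟯) m).symm
  have hgint : IsIntegral ℤ g := by
    refine ⟨X^2 - C (m:ℤ), Polynomial.monic_X_pow_sub_C _ (by norm_num), ?_⟩
    show (Polynomial.aeval g) (X^2 - C (m:ℤ)) = 0
    rw [map_sub, map_pow, Polynomial.aeval_X, Polynomial.aeval_C]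
    rw [show (algebraMap ℤ ℚ⟮θ⟯) ((m:ℤ)) = algebraMap ℚ ℚ⟮θ⟯ (m:ℚ) by
      rw [map_natCast]; exact hmKcast]
    rw [← hg2]; ring
  -- suppose class number is 1
  have hcpos : 0 < NumberField.classNumber ℚ⟮θ⟯ := Fintype.card_pos
  have hle1 : NumberField.classNumber ℚ⟮θ⟯ ≤ 1 := not_lt.mp hlt
  have hcn1 : NumberField.classNumber ℚ⟮θ⟯ = 1 := by omega
  have hPID : IsPrincipalIdealRing (𝓞 ℚ⟮θ⟯) :=
    (NumberField.classNumber_eq_one_iff).mp hcn1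
  -- a square root of -1 mod p
  haveI : Fact p.Prime := ⟨hp⟩
  obtain ⟨t, ht⟩ := ZMod.exists_sq_eq_neg_one_iff.mpr (by omega : p % 4 ≠ 3)
  set s : ℤ := (t.val : ℤ) with hsdef
  have hsp : ((s : ℤ) : ZMod p) = t := by
    rw [hsdef]; push_cast; rw [ZMod.natCast_val, ZMod.cast_id]
  have hps1 : (p:ℤ) ∣ s^2 + 1 := by
    have : ((s^2 + 1 : ℤ) : ZMod p) = 0 := by
      push_cast
      rw [hsp, sq, ← ht]
      ring
    exact_mod_cast (ZMod.intCast_zmod_eq_zero_iff_dvd _ _).mp this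
  have hpm1 : (p:ℤ) ∣ (m:ℤ) + 1 := ⟨4*(n:ℤ)^2*p, by rw [hm]; ring⟩
  have hpsm : (p:ℤ) ∣ s^2 - (m:ℤ) := by
    have : s^2 - (m:ℤ) = (s^2 + 1) - ((m:ℤ) + 1) := by ring
    rw [this]; exact dvd_sub hps1 hpm1
  have hpns : ¬ (p:ℤ) ∣ s := by
    intro hdvd
    have : (p:ℤ) ∣ 1 := by
      have h1 : (p:ℤ) ∣ s * s := hdvd.mul_right s
      have : (1:ℤ) = (s^2 + 1) - s * s := by ring
      rw [this]; exact dvd_sub hps1 h1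
    have : (p:ℤ) ≤ 1 := Int.le_of_dvd one_pos this
    omega
  -- ring of integers elements
  set gO : 𝓞 ℚ⟮θ⟯ := ⟨g, hgint⟩ with hgOdef
  set sO : 𝓞 ℚ⟮θ⟯ := ((s:ℤ) : 𝓞 ℚ⟮θ⟯) with hsOdef
  -- trace of g is 0
  have hqf := fun x => quad_formula B g (m:ℚ) hB0 hB1 hg2 x
  have htrg : Algebra.trace ℚ ℚ⟮θ⟯ g = 0 := by
    rw [show Algebra.trace ℚ ℚ⟮θ⟯ g = 2 * B.repr g 0 from (hqf g).2, ← hB1, Module.Basis.repr_self]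
    simp
  have htr_rat : ∀ q : ℚ, Algebra.trace ℚ ℚ⟮θ⟯ (algebraMap ℚ _ q) = 2 * q := by
    intro q
    rw [Algebra.trace_algebraMap, hfr]
    push_cast
    ring
  -- p is not prime in the ring of integers
  have hgOcoe : algebraMap (𝓞 ℚ⟮θ⟯) ℚ⟮θ⟯ gO = g := rfl
  have hgOsq : gO * gO = ((m:ℕ) : 𝓞 ℚ⟮θ⟯) := by
    apply RingOfIntegers.coe_injective
    rw [map_mul, map_natCast, hgOcoe]
    rw [hg2]
    exact hmKcast.symm
  have hpnotprime : ¬ Prime ((p : ℕ) : 𝓞 ℚ⟮θ⟯) := by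
    intro hPr
    obtain ⟨c, hc⟩ := hpsm
    have hfac : (sO - gO) * (sO + gO) = ((p:ℕ) : 𝓞 ℚ⟮θ⟯) * ((c:ℤ) : 𝓞 ℚ⟮θ⟯) := by
      have h1 : (sO - gO) * (sO + gO) = sO*sO - gO*gO := by ring
      rw [h1, hgOsq, hsOdef]
      have h2 : ((s^2 - (m:ℤ) : ℤ) : 𝓞 ℚ⟮θ⟯) = (((p:ℤ)*c : ℤ) : 𝓞 ℚ⟮θ⟯) := by
        exact_mod_cast congrArg (fun z : ℤ => (z : 𝓞 ℚ⟮θ⟯)) hc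
      push_cast at h2 ⊢
      linear_combination h2
    have hdvdfac : ((p:ℕ) : 𝓞 ℚ⟮θ⟯) ∣ (sO - gO) * (sO + gO) := ⟨_, hfac⟩
    have htr_int : ∀ u : 𝓞 ℚ⟮θ⟯, ((p:ℕ) : 𝓞 ℚ⟮θ⟯) ∣ u →
        ∃ z : ℤ, Algebra.trace ℚ ℚ⟮θ⟯ (algebraMap (𝓞 ℚ⟮θ⟯) ℚ⟮θ⟯ u) = (p:ℚ) * z := by
      rintro u ⟨β, hβ⟩
      obtain ⟨z, hz⟩ := rat_int_of_integral
        (Algebra.isIntegral_trace (R := ℤ) (β.isIntegral_coe))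
      refine ⟨z, ?_⟩
      have h3 : algebraMap (𝓞 ℚ⟮θ⟯) ℚ⟮θ⟯ u
          = algebraMap ℚ ℚ⟮θ⟯ (p:ℚ) * algebraMap (𝓞 ℚ⟮θ⟯) ℚ⟮θ⟯ β := by
        rw [hβ, map_mul, map_natCast, map_natCast]
      rw [h3, ← Algebra.smul_def, map_smul, hz]
      simp [smul_eq_mul]
    have key : ∀ u : 𝓞 ℚ⟮θ⟯, ((p:ℕ) : 𝓞 ℚ⟮θ⟯) ∣ u →
        (algebraMap (𝓞 ℚ⟮θ⟯) ℚ⟮θ⟯ u = algebraMap ℚ ℚ⟮θ⟯ (s:ℚ) - g ∨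
         algebraMap (𝓞 ℚ⟮θ⟯) ℚ⟮θ⟯ u = algebraMap ℚ ℚ⟮θ⟯ (s:ℚ) + g) → False := by
      rintro u hdvd hcase
      obtain ⟨z, hz⟩ := htr_int u hdvd
      have hL : Algebra.trace ℚ ℚ⟮θ⟯ (algebraMap (𝓞 ℚ⟮θ⟯) ℚ⟮θ⟯ u) = 2 * (s:ℚ) := by
        rcases hcase with hcase | hcase <;>
          rw [hcase] <;> [rw [map_sub, htrg, htr_rat]; rw [map_add, htrg, htr_rat]] <;> ring
      rw [hL] at hz
      have hzz : 2 * s = (p:ℤ) * z := by exact_mod_cast hz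
      rcases (Int.Prime.dvd_mul' hp ⟨z, hzz⟩) with h2 | h2
      · have : (p:ℤ) ≤ 2 := Int.le_of_dvd two_pos h2
        omega
      · exact hpns h2
    have hsOcoe : algebraMap (𝓞 ℚ⟮θ⟯) ℚ⟮θ⟯ sO = algebraMap ℚ ℚ⟮θ⟯ (s:ℚ) := by
      rw [hsOdef, map_intCast, map_intCast]
    rcases hPr.2.2 _ _ hdvdfac with hd | hd
    · exact key _ hd (Or.inl (by rw [map_sub, hsOcoe, hgOcoe]))
    · exact key _ hd (Or.inr (by rw [map_add, hsOcoe, hgOcoe]))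
  -- p is not a unit in the ring of integers
  haveI := hPID
  have hNne : ∀ γ : 𝓞 ℚ⟮θ⟯, ¬ IsUnit γ → (Algebra.norm ℤ γ).natAbs ≠ 1 := by
    intro γ hγ h1
    apply hγ
    have h2 : |Algebra.norm ℤ γ| = 1 := by
      rw [Int.abs_eq_natAbs, h1]; rfl
    rw [NumberField.isUnit_iff_norm, RingOfIntegers.coe_norm, ← Algebra.coe_norm_int,
      ← Int.cast_abs, h2]
    norm_num
  have hpOcast : (((p:ℕ)) : 𝓞 ℚ⟮θ⟯) = algebraMap ℤ _ ((p:ℤ)) := (map_natCast _ p).symm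
  have hNp : Algebra.norm ℤ (((p:ℕ)) : 𝓞 ℚ⟮θ⟯) = (p:ℤ)^2 := by
    rw [hpOcast, Algebra.norm_algebraMap_of_basis (Module.Free.chooseBasis ℤ (𝓞 ℚ⟮θ⟯)),
      ← Module.finrank_eq_card_chooseBasisIndex, RingOfIntegers.rank, hfr]
  have hpunit : ¬ IsUnit (((p:ℕ)) : 𝓞 ℚ⟮θ⟯) := by
    intro hu
    have h1 : ((Algebra.norm ℤ (((p:ℕ)) : 𝓞 ℚ⟮θ⟯)).natAbs : ℚ)
        = |(RingOfIntegers.norm ℚ (((p:ℕ)) : 𝓞 ℚ⟮θ⟯) : ℚ)| := by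
      rw [RingOfIntegers.coe_norm, ← Algebra.coe_norm_int, Nat.cast_natAbs, Int.cast_abs]
    rw [NumberField.isUnit_iff_norm.mp hu, hNp] at h1
    have h2 : ((p:ℤ)^2).natAbs = 1 := by exact_mod_cast h1
    rw [Int.natAbs_pow] at h2
    simp only [Int.natAbs_natCast] at h2
    have := hp.two_le
    nlinarith [h2]
  -- p is not irreducible, hence factors
  have hirrp : ¬ Irreducible (((p:ℕ)) : 𝓞 ℚ⟮θ⟯) := fun hI => hpnotprime hI.prime
  rw [irreducible_iff] at hirrp
  push_neg at hirrp
  obtain ⟨α, β, hαβ, hαu, hβu⟩ := hirrp hpunit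
  have hNmul : Algebra.norm ℤ α * Algebra.norm ℤ β = (p:ℤ)^2 := by
    rw [← map_mul, ← hαβ, hNp]
  have hnat : (Algebra.norm ℤ α).natAbs * (Algebra.norm ℤ β).natAbs = p^2 := by
    have h := congrArg Int.natAbs hNmul
    simpa [Int.natAbs_mul, Int.natAbs_pow] using h
  have hdvdp2 : (Algebra.norm ℤ α).natAbs ∣ p^2 := ⟨_, hnat.symm⟩
  obtain ⟨i, hi2, hieq⟩ := (Nat.dvd_prime_pow hp).mp hdvdp2
  have hNα : (Algebra.norm ℤ α).natAbs = p := by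
    interval_cases i
    · exact absurd (by simpa using hieq) (hNne α hαu)
    · simpa using hieq
    · exfalso
      rw [hieq] at hnat
      have hp2pos : 0 < p^2 := by positivity
      have : (Algebra.norm ℤ β).natAbs = 1 := by
        have h' : p^2 * (Algebra.norm ℤ β).natAbs = p^2 * 1 := by omega
        exact Nat.eq_of_mul_eq_mul_left hp2pos h'
      exact hNne β hβu this
  set w : ℤ := Algebra.norm ℤ α with hwdef
  have hw : w = (p:ℤ) ∨ w = -(p:ℤ) := by
    rcases Int.natAbs_eq w with h | h
    · left; rw [h, hNα]
    · right; rw [h, hNα]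
  -- express norm and trace of α via the basis
  set x : ℚ⟮θ⟯ := algebraMap (𝓞 ℚ⟮θ⟯) ℚ⟮θ⟯ α with hxdef
  set q : ℚ := B.repr x 0 with hqdef
  set r : ℚ := B.repr x 1 with hrdef
  have hNx : q^2 - (m:ℚ)*r^2 = (w:ℚ) := by
    rw [← (hqf x).1, hxdef]
    rw [show (algebraMap (𝓞 ℚ⟮θ⟯) ℚ⟮θ⟯ α) = (α : ℚ⟮θ⟯) from rfl]
    rw [hwdef]; exact (Algebra.coe_norm_int α).symm
  obtain ⟨tz, hz⟩ := rat_int_of_integral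
    (Algebra.isIntegral_trace (R := ℤ) (α.isIntegral_coe))
  have hz2 : (tz:ℚ) = 2*q := by
    rw [hz]
    rw [show Algebra.trace ℚ ℚ⟮θ⟯ (algebraMap (𝓞 ℚ⟮θ⟯) ℚ⟮θ⟯ α) = Algebra.trace ℚ ℚ⟮θ⟯ x from rfl]
    exact (hqf x).2
  have hmr : (m:ℚ)*(2*r)^2 = ((tz^2 - 4*w : ℤ):ℚ) := by
    push_cast
    linear_combination (-4:ℚ)*hNx + (-(tz:ℚ)-2*q)*hz2
  obtain ⟨b, hb⟩ := den_one_of_sf m hsf (2*r) (tz^2 - 4*w) hmr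
  have hfinQ : (m:ℚ)*(b:ℚ)^2 = ((tz^2 - 4*w : ℤ):ℚ) := by rw [← hb]; exact hmr
  have hfinZ : (m:ℤ)*b^2 = tz^2 - 4*w := by exact_mod_cast hfinQ
  have hdio : tz^2 - (m:ℤ)*b^2 = 4*(p:ℤ) ∨ tz^2 - (m:ℤ)*b^2 = -(4*(p:ℤ)) := by
    rcases hw with h | h <;> [left; right] <;> rw [h] at hfinZ <;> linarith
  obtain ⟨hm4, hkbound⟩ := hm4_aux n p hn hp2 m hm
  exact keyB (p:ℤ) (2*(n:ℤ)*p) (m:ℤ) hpz (prime_not_sq p hp) hm hm4 hkbound tz b hdio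
end

section
/- If p is a prime with p ≡ ±1 (mod 4) (i.e., p odd), n is a positive multiple of 3, and m = (2np)^2 + 3 is square-free, then the class number of Q(√m) is greater than 1. -/
open IntermediateField NumberField Polynomial

lemma descent_step (M u v a b : ℤ) (hu0 : 0 ≤ u) (hv0 : 0 ≤ v)
    (huv : u ^ 2 - M * v ^ 2 = 1) (hgap : v ^ 2 < u - 1)
    (ha0 : 0 ≤ a) (hb1 : 1 ≤ b) (heq : a ^ 2 - M * b ^ 2 = -2) :
    1 ≤ u * b - v * a ∧ u * b - v * a < b ∧
      (u * a - M * v * b) ^ 2 - M * (u * b - v * a) ^ 2 = -2 := by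
  have hb2 : 1 ≤ b ^ 2 := by nlinarith
  have h1 : (v * a) ^ 2 < (u * b) ^ 2 := by nlinarith
  have h2 : v * a < u * b := by nlinarith [mul_nonneg hv0 ha0, mul_nonneg hu0 (by linarith : (0:ℤ) ≤ b)]
  have h3 : ((u - 1) * b) ^ 2 < (v * a) ^ 2 := by nlinarith
  have h4 : (u - 1) * b < v * a := by
    nlinarith [mul_nonneg hv0 ha0, mul_nonneg (by nlinarith : (0:ℤ) ≤ u - 1) (by linarith : (0:ℤ) ≤ b)]
  refine ⟨by omega, by nlinarith, ?_⟩
  linear_combination (a ^ 2 - M * b ^ 2) * huv + heq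

lemma descent_aux_s11 (s : ℤ) (hs : 1 ≤ s) :
    ∀ Y : ℕ, ∀ x y : ℤ, y.natAbs ≤ Y → x ^ 2 - (9 * s ^ 2 + 3) * y ^ 2 ≠ -2 := by
  intro Y
  induction Y with
  | zero =>
    intro x y hy heq
    have hy0 : y = 0 := by omega
    subst hy0
    nlinarith [sq_nonneg x]
  | succ Y ih =>
    intro x y hy heq
    obtain ⟨a, ha⟩ : ∃ a : ℤ, a = |x| := ⟨_, rfl⟩
    obtain ⟨b, hb⟩ : ∃ b : ℤ, b = |y| := ⟨_, rfl⟩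
    have ha0 : 0 ≤ a := ha ▸ abs_nonneg x
    have hb0 : 0 ≤ b := hb ▸ abs_nonneg y
    have heq' : a ^ 2 - (9 * s ^ 2 + 3) * b ^ 2 = -2 := by
      rw [ha, hb, sq_abs, sq_abs]; exact heq
    have hbne : b ≠ 0 := by
      intro h
      rw [h] at heq'
      nlinarith [sq_nonneg a]
    have hb1 : 1 ≤ b := by omega
    obtain ⟨h1, h2, h3⟩ := descent_step (9 * s ^ 2 + 3) (6 * s ^ 2 + 1) (2 * s) a b
      (by nlinarith) (by linarith) (by ring) (by nlinarith) ha0 hb1 heq'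
    obtain ⟨z, hz⟩ : ∃ z : ℤ, z = (6 * s ^ 2 + 1) * b - 2 * s * a := ⟨_, rfl⟩
    rw [← hz] at h1 h2 h3
    refine ih _ z ?_ h3
    have hyY : b ≤ (Y : ℤ) + 1 := by
      rw [hb, Int.abs_eq_natAbs]; exact_mod_cast hy
    omega

lemma no_norm_two (s : ℤ) (hs : 1 ≤ s) (A B : ℤ) :
    A ^ 2 - (9 * s ^ 2 + 3) * B ^ 2 ≠ 2 ∧ A ^ 2 - (9 * s ^ 2 + 3) * B ^ 2 ≠ -2 := by
  constructor
  · intro h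
    have h30 : (3 : ZMod 3) = 0 := by decide
    have h3 : ((A : ZMod 3)) ^ 2 = 2 := by
      have := congrArg (fun z : ℤ => (z : ZMod 3)) h
      push_cast at this
      linear_combination this + (3 * (s : ZMod 3) ^ 2 * (B : ZMod 3) ^ 2 + (B : ZMod 3) ^ 2) * h30
    revert h3
    generalize (A : ZMod 3) = a
    revert a; decide
  · exact descent_aux_s11 s hs (B.natAbs) A B le_rfl

-- squarefree denominators lemma
lemma rat_int_of_sq (M : ℤ) (hsf : Squarefree M) (q : ℚ) (z : ℤ) (h : (z : ℚ) = M * q ^ 2) :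
    ∃ w : ℤ, (w : ℚ) = q := by
  have hd : ((q.den : ℤ) : ℚ) ≠ 0 := by exact_mod_cast q.den_nz
  have hq : q * (q.den : ℚ) = (q.num : ℚ) := by
    nth_rewrite 1 [← Rat.num_div_den q]
    exact div_mul_cancel₀ _ hd
  have key : (z * (q.den : ℤ) ^ 2 : ℚ) = ((M * q.num ^ 2 : ℤ) : ℚ) := by
    push_cast
    rw [← hq, h]; ring
  have key2 : z * (q.den : ℤ) ^ 2 = M * q.num ^ 2 := by exact_mod_cast key
  have hdvd : ((q.den : ℤ)) ^ 2 ∣ M * q.num ^ 2 := ⟨z, by linarith⟩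
  have hcop : IsCoprime ((q.den : ℤ)) q.num := by
    rw [Int.isCoprime_iff_gcd_eq_one]
    simpa [Int.gcd, Nat.coprime_comm] using q.reduced
  have hdvdM : ((q.den : ℤ)) ^ 2 ∣ M := (hcop.pow).dvd_of_dvd_mul_right hdvd
  have hunit : IsUnit ((q.den : ℤ)) := hsf _ (by rwa [← sq])
  have hden1 : q.den = 1 := by
    have := Int.isUnit_iff.mp hunit
    omega
  exact ⟨q.num, Rat.coe_int_num_of_den_eq_one hden1⟩

-- parity lemma
lemma parity_lemma (M A B C : ℤ) (hM : M % 4 = 3) (h : A ^ 2 - M * B ^ 2 = 4 * C) :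
    2 ∣ A ∧ 2 ∣ B := by
  rcases Int.even_or_odd A with ⟨j, hj⟩ | ⟨j, hj⟩ <;>
    rcases Int.even_or_odd B with ⟨k, hk⟩ | ⟨k, hk⟩
  · exact ⟨⟨j, by omega⟩, ⟨k, by omega⟩⟩
  · -- A even, B odd : 4 ∣ M
    exfalso
    subst hj hk
    have : (4 : ℤ) ∣ M := ⟨j ^ 2 - M * k ^ 2 - M * k - C, by linear_combination -h⟩
    omega
  · -- A odd, B even : 4 ∣ A^2 odd
    exfalso
    subst hj hk
    obtain ⟨w, hw⟩ : ∃ w : ℤ, w = j ^ 2 + j := ⟨_, rfl⟩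
    have : (4 : ℤ) ∣ 4 * w + 1 := ⟨C + M * k ^ 2, by rw [hw]; linear_combination h⟩
    omega
  · -- both odd : M ≡ 1 mod 4
    exfalso
    subst hj hk
    obtain ⟨w, hw⟩ : ∃ w : ℤ, w = j ^ 2 + j - M * k ^ 2 - M * k - C := ⟨_, rfl⟩
    have : M - 1 = 4 * w := by rw [hw]; linear_combination -h
    omega


section Main

variable (M : ℕ) (hsf : Squarefree M) (hM4 : M % 4 = 3) (hM2 : 2 ≤ M)

-- basic real facts
lemma theta_sq (M : ℕ) : Real.sqrt (M : ℝ) ^ 2 = (M : ℝ) := Real.sq_sqrt (by positivity)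

lemma theta_irr (hsf : Squarefree M) (hM2 : 2 ≤ M) : Irrational (Real.sqrt (M : ℝ)) := by
  rw [irrational_sqrt_natCast_iff]
  rintro ⟨r, hr⟩
  have hu : IsUnit r := hsf r ⟨1, by rw [hr]; ring⟩
  rw [Nat.isUnit_iff] at hu
  rw [hu] at hr
  simp at hr
  omega

lemma uniq_rep (hsf : Squarefree M) (hM2 : 2 ≤ M) (a b c d : ℚ) (h : (a : ℝ) + b * Real.sqrt (M : ℝ) = c + d * Real.sqrt (M : ℝ)) :
    a = c ∧ b = d := by
  by_cases hbd : b = d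
  · subst hbd
    have : (a : ℝ) = c := by linarith
    exact ⟨by exact_mod_cast this, rfl⟩
  · exfalso
    apply theta_irr M hsf hM2
    refine ⟨(a - c) / (d - b), ?_⟩
    have hdb : ((d : ℝ) - b) ≠ 0 := by
      intro h0
      apply hbd
      have : (b : ℝ) = d := by linarith
      exact_mod_cast this
    push_cast
    field_simp
    linarith

lemma theta_int : IsIntegral ℤ (Real.sqrt (M : ℝ)) := by
  refine ⟨X ^ 2 - C (M : ℤ), monic_X_pow_sub_C _ (by norm_num), ?_⟩
  simp [eval₂, theta_sq]

lemma theta_intQ : IsIntegral ℚ (Real.sqrt (M : ℝ)) := by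
  refine ⟨X ^ 2 - C (M : ℚ), monic_X_pow_sub_C _ (by norm_num), ?_⟩
  simp [eval₂, theta_sq]

lemma theta_minpoly (hsf : Squarefree M) (hM2 : 2 ≤ M) : minpoly ℚ (Real.sqrt (M : ℝ)) = X ^ 2 - C (M : ℚ) := by
  have hPm : (X ^ 2 - C (M : ℚ)).Monic := monic_X_pow_sub_C _ (by norm_num)
  have hroot : (Polynomial.aeval (Real.sqrt (M : ℝ))) (X ^ 2 - C (M : ℚ)) = 0 := by
    simp [theta_sq]
  have hdvd := minpoly.dvd ℚ (Real.sqrt (M : ℝ)) hroot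
  have hdeg2 : (X ^ 2 - C (M : ℚ)).natDegree = 2 := natDegree_X_pow_sub_C
  have hge : 2 ≤ (minpoly ℚ (Real.sqrt (M : ℝ))).natDegree := by
    rw [minpoly.two_le_natDegree_iff (theta_intQ M)]
    intro ⟨r, hr⟩
    exact theta_irr M hsf hM2 ⟨r, hr⟩
  obtain ⟨q, hq⟩ := hdvd
  have hmono := minpoly.monic (theta_intQ M)
  have hqm : q.Monic := hmono.of_mul_monic_left (by rw [← hq]; exact hPm)
  have hdq : q.natDegree = 0 := by
    have hne : q ≠ 0 := hqm.ne_zero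
    have := natDegree_mul (p := minpoly ℚ (Real.sqrt (M : ℝ))) (q := q) hmono.ne_zero hne
    rw [← hq, hdeg2] at this
    omega
  have hq1 : q = 1 := hqm.natDegree_eq_zero.mp hdq
  rw [hq1, mul_one] at hq
  exact hq.symm

end Main

section Core

variable (M : ℕ) (hsf : Squarefree M) (hM4 : M % 4 = 3) (hM2 : 2 ≤ M)

local notation "K" => ℚ⟮(Real.sqrt M : ℝ)⟯

noncomputable def ξ : K := IntermediateField.AdjoinSimple.gen ℚ (Real.sqrt M)

lemma xi_map : algebraMap K ℝ (ξ M) = Real.sqrt (M : ℝ) := IntermediateField.AdjoinSimple.algebraMap_gen ℚ _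

lemma xi_sq : (ξ M) ^ 2 = algebraMap ℚ K (M : ℚ) := by
  apply (algebraMap K ℝ).injective
  rw [map_pow, xi_map, theta_sq]
  rw [← IsScalarTower.algebraMap_apply ℚ K ℝ]
  simp

-- every element of K maps to a + b θ in ℝ
lemma rep_ex (x : K) : ∃ a b : ℚ, algebraMap K ℝ x = (a : ℝ) + b * Real.sqrt (M : ℝ) := by
  obtain ⟨f, hf⟩ := (IntermediateField.adjoin.powerBasis (theta_intQ M)).exists_eq_aeval' x
  rw [IntermediateField.adjoin.powerBasis_gen] at hf
  set P : ℚ[X] := X ^ 2 - C (M : ℚ) with hP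
  have hPm : P.Monic := monic_X_pow_sub_C _ (by norm_num)
  have hmod := modByMonic_add_div f P
  set r : ℚ[X] := f %ₘ P with hr
  have hdeg : r.degree < P.degree := degree_modByMonic_lt f hPm
  have hPdeg : P.degree = 2 := degree_X_pow_sub_C (by norm_num) _
  have hrdeg : r.degree ≤ 1 := by
    rw [hPdeg] at hdeg
    exact Order.le_of_lt_succ (by exact_mod_cast hdeg)
  refine ⟨r.coeff 0, r.coeff 1, ?_⟩
  have hxf : algebraMap K ℝ x = Polynomial.aeval (Real.sqrt (M : ℝ)) f := by
    rw [hf]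
    have h2 := Polynomial.aeval_algHom_apply (IsScalarTower.toAlgHom ℚ _ ℝ) (ξ M) f
    rw [show (IsScalarTower.toAlgHom ℚ _ ℝ) (ξ M) = Real.sqrt (M : ℝ) from xi_map M] at h2
    exact h2.symm
  have hPzero : Polynomial.aeval (Real.sqrt (M : ℝ)) P = 0 := by
    simp [hP, theta_sq]
  have : Polynomial.aeval (Real.sqrt (M : ℝ)) f = Polynomial.aeval (Real.sqrt (M : ℝ)) r := by
    rw [← hmod]
    simp [map_add, map_mul, hPzero]
  rw [hxf, this]
  conv_lhs => rw [eq_X_add_C_of_degree_le_one hrdeg]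
  simp only [map_add, map_mul, aeval_C, aeval_X, eq_ratCast]
  ring

end Core

section Core2

variable (M : ℕ)

local notation "K" => ℚ⟮(Real.sqrt M : ℝ)⟯

-- the conjugation map
noncomputable def σ (hsf : Squarefree M) (hM2 : 2 ≤ M) : K →ₐ[ℚ] K :=
  (IntermediateField.adjoin.powerBasis (theta_intQ M)).lift (-(ξ M)) (by
    rw [IntermediateField.adjoin.powerBasis_gen, IntermediateField.minpoly_gen,
      theta_minpoly M hsf hM2]
    rw [map_sub, map_pow, aeval_X, aeval_C]
    rw [neg_pow, ← xi_sq M]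
    ring)

lemma sigma_xi (hsf : Squarefree M) (hM2 : 2 ≤ M) : σ M hsf hM2 (ξ M) = -(ξ M) :=
  PowerBasis.lift_gen _ _ _

lemma sigma_rep (hsf : Squarefree M) (hM2 : 2 ≤ M) (a b : ℚ) :
    σ M hsf hM2 (algebraMap ℚ K a + algebraMap ℚ K b * ξ M)
      = algebraMap ℚ K a - algebraMap ℚ K b * ξ M := by
  rw [map_add, map_mul, sigma_xi, AlgHom.commutes, AlgHom.commutes]
  ring

-- integral elements have half-integer coordinates and integer norm; with parity, integer coords
lemma integral_coords (hsf : Squarefree M) (hM4 : M % 4 = 3) (hM2 : 2 ≤ M)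
    (x : K) (hx : IsIntegral ℤ x) (a b : ℚ)
    (hab : algebraMap K ℝ x = (a : ℝ) + b * Real.sqrt (M : ℝ)) :
    ∃ A B : ℤ, (A : ℚ) = a ∧ (B : ℚ) = b := by
  have hinj : Function.Injective (algebraMap K ℝ) := (algebraMap K ℝ).injective
  have hxK : x = algebraMap ℚ K a + algebraMap ℚ K b * ξ M := by
    apply hinj
    rw [hab, map_add, map_mul, xi_map]
    rw [← IsScalarTower.algebraMap_apply ℚ K ℝ, ← IsScalarTower.algebraMap_apply ℚ K ℝ]
    simp [eq_ratCast]
  have hσint : IsIntegral ℤ (σ M hsf hM2 x) :=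
    hx.map ((σ M hsf hM2).toRingHom.toIntAlgHom)
  -- trace
  have htr : x + σ M hsf hM2 x = algebraMap ℚ K (2 * a) := by
    rw [hxK, sigma_rep]
    rw [map_mul, map_ofNat]
    ring
  have htrint : IsIntegral ℤ ((2 : ℚ) * a) := by
    rw [← isIntegral_algebraMap_iff (algebraMap ℚ K).injective]
    rw [← htr]
    exact hx.add hσint
  obtain ⟨A2, hA2⟩ := IsIntegrallyClosed.isIntegral_iff.mp htrint
  simp only [algebraMap_int_eq, eq_intCast] at hA2
  -- norm
  have hnr : x * σ M hsf hM2 x = algebraMap ℚ K (a ^ 2 - M * b ^ 2) := by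
    rw [hxK, sigma_rep]
    have : (algebraMap ℚ K a + algebraMap ℚ K b * ξ M) *
        (algebraMap ℚ K a - algebraMap ℚ K b * ξ M)
        = (algebraMap ℚ K a) ^ 2 - (algebraMap ℚ K b) ^ 2 * (ξ M) ^ 2 := by ring
    rw [this, xi_sq, ← map_pow, ← map_pow, ← map_mul, ← map_sub]
    exact congrArg _ (by ring)
  have hnrint : IsIntegral ℤ (a ^ 2 - M * b ^ 2) := by
    rw [← isIntegral_algebraMap_iff (algebraMap ℚ K).injective]
    rw [← hnr]
    exact hx.mul hσint
  obtain ⟨N, hN⟩ := IsIntegrallyClosed.isIntegral_iff.mp hnrint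
  simp only [algebraMap_int_eq, eq_intCast] at hN
  -- 2b is an integer by squarefreeness
  have hsq : ((A2 ^ 2 - 4 * N : ℤ) : ℚ) = (M : ℤ) * (2 * b) ^ 2 := by
    push_cast
    rw [hA2, hN]
    ring
  obtain ⟨B2, hB2⟩ := rat_int_of_sq (M : ℤ) (Int.squarefree_natCast.mpr hsf) (2 * b) _ hsq
  -- parity
  have hkey : A2 ^ 2 - (M : ℤ) * B2 ^ 2 = 4 * N := by
    have : ((A2 ^ 2 - (M : ℤ) * B2 ^ 2 : ℤ) : ℚ) = ((4 * N : ℤ) : ℚ) := by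
      push_cast
      rw [hA2, hB2, hN]
      ring
    exact_mod_cast this
  obtain ⟨hA, hB⟩ := parity_lemma (M : ℤ) A2 B2 N (by omega) hkey
  obtain ⟨A, hA'⟩ := hA
  obtain ⟨B, hB'⟩ := hB
  refine ⟨A, B, ?_, ?_⟩
  · have : ((2 * A : ℤ) : ℚ) = 2 * a := by rw [← hA', hA2]
    push_cast at this
    linarith
  · have : ((2 * B : ℤ) : ℚ) = 2 * b := by rw [← hB', hB2]
    push_cast at this
    linarith

end Core2

section Final

set_option maxHeartbeats 1000000 in
set_option synthInstance.maxHeartbeats 400000 in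
theorem not_pid (M : ℕ) (hsf : Squarefree M) (hM4 : M % 4 = 3) (hM2 : 2 ≤ M)
    (hdio : ∀ A B : ℤ, A ^ 2 - (M : ℤ) * B ^ 2 ≠ 2 ∧ A ^ 2 - (M : ℤ) * B ^ 2 ≠ -2)
    [NumberField ℚ⟮(Real.sqrt M : ℝ)⟯]
    (hpid : IsPrincipalIdealRing (𝓞 ℚ⟮(Real.sqrt M : ℝ)⟯)) : False := by
  haveI := hpid
  have hθ2 : Real.sqrt (M : ℝ) ^ 2 = (M : ℝ) := theta_sq M
  -- the integer Θ
  have hxi_int : IsIntegral ℤ (ξ M) := by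
    refine ⟨X ^ 2 - C (M : ℤ), monic_X_pow_sub_C _ (by norm_num), ?_⟩
    have : eval₂ (algebraMap ℤ ℚ⟮(Real.sqrt M : ℝ)⟯) (ξ M) (X ^ 2 - C (M : ℤ))
        = (ξ M) ^ 2 - algebraMap ℤ ℚ⟮(Real.sqrt M : ℝ)⟯ (M : ℤ) := by simp
    rw [this, xi_sq, sub_eq_zero]
    simp
  set Θ : 𝓞 ℚ⟮(Real.sqrt M : ℝ)⟯ := ⟨ξ M, hxi_int⟩ with hΘ
  have theta_O_map : algebraMap (𝓞 ℚ⟮(Real.sqrt M : ℝ)⟯) ℚ⟮(Real.sqrt M : ℝ)⟯ Θ = ξ M := rfl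
  -- uniqueness over ℤ
  have uniqZ : ∀ A B C D : ℤ, ((A : ℝ) + B * Real.sqrt (M : ℝ) = C + D * Real.sqrt (M : ℝ))
      → A = C ∧ B = D := by
    intro A B C D h
    have := uniq_rep M hsf hM2 A B C D (by push_cast; exact_mod_cast h)
    exact ⟨by exact_mod_cast this.1, by exact_mod_cast this.2⟩
  -- integer representation
  have nrep : ∀ x : 𝓞 ℚ⟮(Real.sqrt M : ℝ)⟯, ∃ A B : ℤ,
      algebraMap ℚ⟮(Real.sqrt M : ℝ)⟯ ℝ (algebraMap (𝓞 ℚ⟮(Real.sqrt M : ℝ)⟯) ℚ⟮(Real.sqrt M : ℝ)⟯ x) = (A : ℝ) + B * Real.sqrt (M : ℝ) := by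
    intro x
    obtain ⟨a, b, hab⟩ := rep_ex M (algebraMap (𝓞 ℚ⟮(Real.sqrt M : ℝ)⟯) ℚ⟮(Real.sqrt M : ℝ)⟯ x)
    obtain ⟨A, B, hA, hB⟩ := integral_coords M hsf hM4 hM2 _
      (NumberField.RingOfIntegers.isIntegral_coe x) a b hab
    exact ⟨A, B, by rw [hab, ← hA, ← hB]; push_cast; ring⟩
  -- unit criterion
  have unit_of_norm : ∀ (x : 𝓞 ℚ⟮(Real.sqrt M : ℝ)⟯) (A B : ℤ),
      algebraMap ℚ⟮(Real.sqrt M : ℝ)⟯ ℝ (algebraMap (𝓞 ℚ⟮(Real.sqrt M : ℝ)⟯) ℚ⟮(Real.sqrt M : ℝ)⟯ x) = (A : ℝ) + B * Real.sqrt (M : ℝ) →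
      (A ^ 2 - (M : ℤ) * B ^ 2 = 1 ∨ A ^ 2 - (M : ℤ) * B ^ 2 = -1) → IsUnit x := by
    intro x A B h hN
    set e : ℤ := A ^ 2 - (M : ℤ) * B ^ 2 with he
    have hee : e * e = 1 := by rcases hN with h1 | h1 <;> rw [h1] <;> ring
    refine IsUnit.of_mul_eq_one (a := x) ((e : 𝓞 ℚ⟮(Real.sqrt M : ℝ)⟯) * ((A : 𝓞 ℚ⟮(Real.sqrt M : ℝ)⟯) - (B : 𝓞 ℚ⟮(Real.sqrt M : ℝ)⟯) * Θ)) ?_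
    have hw : algebraMap ℚ⟮(Real.sqrt M : ℝ)⟯ ℝ (algebraMap (𝓞 ℚ⟮(Real.sqrt M : ℝ)⟯) ℚ⟮(Real.sqrt M : ℝ)⟯ ((e : 𝓞 ℚ⟮(Real.sqrt M : ℝ)⟯) * ((A : 𝓞 ℚ⟮(Real.sqrt M : ℝ)⟯) - (B : 𝓞 ℚ⟮(Real.sqrt M : ℝ)⟯) * Θ)))
        = (e : ℝ) * ((A : ℝ) - (B : ℝ) * Real.sqrt (M : ℝ)) := by
      simp only [map_mul, map_sub, map_intCast, theta_O_map, xi_map]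
    apply NumberField.RingOfIntegers.coe_injective
    apply (algebraMap ℚ⟮(Real.sqrt M : ℝ)⟯ ℝ).injective
    rw [map_mul, map_one, map_one, map_mul, hw, h]
    have heeR : (e : ℝ) * e = 1 := by exact_mod_cast hee
    have heR : (e : ℝ) = (A : ℝ) ^ 2 - M * B ^ 2 := by rw [he]; push_cast; ring
    linear_combination (-(e : ℝ) * (B : ℝ) ^ 2) * hθ2 + heeR - (e : ℝ) * heR
  -- 2 is irreducible
  have irr2 : Irreducible (2 : 𝓞 ℚ⟮(Real.sqrt M : ℝ)⟯) := by
    constructor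
    · intro hu
      obtain ⟨w, hw⟩ := hu.exists_right_inv
      obtain ⟨A, B, h⟩ := nrep w
      have key : ((2 * A : ℤ) : ℝ) + (2 * B : ℤ) * Real.sqrt (M : ℝ)
          = ((1 : ℤ) : ℝ) + (0 : ℤ) * Real.sqrt (M : ℝ) := by
        have h2 := congrArg (fun z : 𝓞 ℚ⟮(Real.sqrt M : ℝ)⟯ => algebraMap ℚ⟮(Real.sqrt M : ℝ)⟯ ℝ (algebraMap (𝓞 ℚ⟮(Real.sqrt M : ℝ)⟯) ℚ⟮(Real.sqrt M : ℝ)⟯ z)) hw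
        simp only [map_mul, map_one, map_ofNat] at h2
        rw [h] at h2
        push_cast
        linarith
      have := (uniqZ _ _ _ _ key).1
      omega
    · intro α β h2
      obtain ⟨A, B, hα⟩ := nrep α
      obtain ⟨C, D, hβ⟩ := nrep β
      have hprod : ((A * C + M * B * D : ℤ) : ℝ) + ((A * D + B * C : ℤ) : ℝ) * Real.sqrt (M : ℝ)
          = ((2 : ℤ) : ℝ) + ((0 : ℤ) : ℝ) * Real.sqrt (M : ℝ) := by
        have hh := congrArg (fun z : 𝓞 ℚ⟮(Real.sqrt M : ℝ)⟯ => algebraMap ℚ⟮(Real.sqrt M : ℝ)⟯ ℝ (algebraMap (𝓞 ℚ⟮(Real.sqrt M : ℝ)⟯) ℚ⟮(Real.sqrt M : ℝ)⟯ z)) h2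
        simp only [map_mul, map_ofNat] at hh
        rw [hα, hβ] at hh
        push_cast
        linear_combination (-1 : ℝ) * hh - (B : ℝ) * (D : ℝ) * hθ2
      obtain ⟨e1, e2⟩ := uniqZ _ _ _ _ hprod
      have hNN : (A ^ 2 - (M : ℤ) * B ^ 2) * (C ^ 2 - (M : ℤ) * D ^ 2) = 4 := by
        linear_combination (A * C + (M : ℤ) * B * D + 2) * e1 - (M : ℤ) * (A * D + B * C) * e2
      have hNA := hdio A B
      have hNC := hdio C D
      have habs : (A ^ 2 - (M : ℤ) * B ^ 2).natAbs * (C ^ 2 - (M : ℤ) * D ^ 2).natAbs = 4 := by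
        rw [← Int.natAbs_mul, hNN]; rfl
      have hdvd4 : (A ^ 2 - (M : ℤ) * B ^ 2).natAbs ∣ 4 := ⟨_, habs.symm⟩
      have h14 : (A ^ 2 - (M : ℤ) * B ^ 2).natAbs = 1 ∨ (A ^ 2 - (M : ℤ) * B ^ 2).natAbs = 2
          ∨ (A ^ 2 - (M : ℤ) * B ^ 2).natAbs = 4 := by
        have hle := Nat.le_of_dvd (by norm_num) hdvd4
        have h45 : ∀ k < 5, (k ∣ 4 → k = 1 ∨ k = 2 ∨ k = 4) := by decide
        exact h45 _ (by omega) hdvd4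
      have hNA2 : (A ^ 2 - (M : ℤ) * B ^ 2).natAbs ≠ 2 := by
        intro h
        rcases Int.natAbs_eq_iff.mp h with h' | h'
        · exact hNA.1 (by exact_mod_cast h')
        · exact hNA.2 (by exact_mod_cast h')
      rcases h14 with h1 | h1 | h1
      · left
        refine unit_of_norm α A B hα ?_
        rcases Int.natAbs_eq_iff.mp h1 with h' | h' <;> [left; right] <;> exact_mod_cast h'
      · exact absurd h1 hNA2
      · right
        have hNC1 : (C ^ 2 - (M : ℤ) * D ^ 2).natAbs = 1 := by rw [h1] at habs; omega
        refine unit_of_norm β C D hβ ?_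
        rcases Int.natAbs_eq_iff.mp hNC1 with h' | h' <;> [left; right] <;> exact_mod_cast h'
  -- 2 is prime, yet divides (1+Θ)(Θ-1) without dividing either factor
  have hprime : Prime (2 : 𝓞 ℚ⟮(Real.sqrt M : ℝ)⟯) := UniqueFactorizationMonoid.irreducible_iff_prime.mp irr2
  obtain ⟨k, hk⟩ : ∃ k : ℕ, M = 2 * k + 1 := ⟨(M - 1) / 2, by omega⟩
  have hfact : (1 + Θ) * (Θ - 1) = (2 : 𝓞 ℚ⟮(Real.sqrt M : ℝ)⟯) * ((k : ℕ) : 𝓞 ℚ⟮(Real.sqrt M : ℝ)⟯) := by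
    apply NumberField.RingOfIntegers.coe_injective
    apply (algebraMap ℚ⟮(Real.sqrt M : ℝ)⟯ ℝ).injective
    simp only [map_mul, map_add, map_sub, map_one, map_ofNat, map_natCast, theta_O_map, xi_map]
    have hMk : (M : ℝ) = 2 * k + 1 := by exact_mod_cast hk
    linear_combination hθ2 + hMk
  rcases hprime.2.2 _ _ ⟨_, hfact⟩ with ⟨γ, hγ⟩ | ⟨γ, hγ⟩
  · obtain ⟨A, B, h⟩ := nrep γ
    have key : ((1 : ℤ) : ℝ) + ((1 : ℤ) : ℝ) * Real.sqrt (M : ℝ)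
        = ((2 * A : ℤ) : ℝ) + ((2 * B : ℤ) : ℝ) * Real.sqrt (M : ℝ) := by
      have hh := congrArg (fun z : 𝓞 ℚ⟮(Real.sqrt M : ℝ)⟯ => algebraMap ℚ⟮(Real.sqrt M : ℝ)⟯ ℝ (algebraMap (𝓞 ℚ⟮(Real.sqrt M : ℝ)⟯) ℚ⟮(Real.sqrt M : ℝ)⟯ z)) hγ
      simp only [map_mul, map_add, map_one, map_ofNat] at hh
      rw [h, theta_O_map, xi_map] at hh
      push_cast
      linarith
    have := (uniqZ _ _ _ _ key).1
    omega
  · obtain ⟨A, B, h⟩ := nrep γ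
    have key : ((-1 : ℤ) : ℝ) + ((1 : ℤ) : ℝ) * Real.sqrt (M : ℝ)
        = ((2 * A : ℤ) : ℝ) + ((2 * B : ℤ) : ℝ) * Real.sqrt (M : ℝ) := by
      have hh := congrArg (fun z : 𝓞 ℚ⟮(Real.sqrt M : ℝ)⟯ => algebraMap ℚ⟮(Real.sqrt M : ℝ)⟯ ℝ (algebraMap (𝓞 ℚ⟮(Real.sqrt M : ℝ)⟯) ℚ⟮(Real.sqrt M : ℝ)⟯ z)) hγ
      simp only [map_mul, map_sub, map_one, map_ofNat] at hh
      rw [h, theta_O_map, xi_map] at hh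
      push_cast
      linarith
    have := (uniqZ _ _ _ _ key).1
    omega

end Final

theorem stmt_11 (p n : ℕ) (hp : p.Prime) (hp4 : p % 4 = 1 ∨ p % 4 = 3)
    (hn : 1 ≤ n) (h3 : 3 ∣ n)
    (m : ℕ) (hm : m = (2 * n * p) ^ 2 + 3) (hsf : Squarefree m)
    (K : IntermediateField ℚ ℝ) (hK : K = ℚ⟮Real.sqrt m⟯) [NumberField K] :
    1 < NumberField.classNumber K := by
  subst hK
  by_contra hlt
  push_neg at hlt
  have hpos : 0 < NumberField.classNumber ℚ⟮(Real.sqrt m : ℝ)⟯ := Fintype.card_pos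
  have h1 : NumberField.classNumber ℚ⟮(Real.sqrt m : ℝ)⟯ = 1 := by omega
  have hpid := NumberField.classNumber_eq_one_iff.mp h1
  obtain ⟨j, hj⟩ := h3
  have hj1 : 1 ≤ j := by omega
  have hp1 : 1 ≤ p := hp.pos
  have hm4 : m % 4 = 3 := by
    have : m = 4 * (n * p) ^ 2 + 3 := by rw [hm]; ring
    omega
  have hm2 : 2 ≤ m := by omega
  have hmZ : (m : ℤ) = 9 * ((2 * j * p : ℕ) : ℤ) ^ 2 + 3 := by
    rw [hm, hj]; push_cast; ring
  have hdio : ∀ A B : ℤ, A ^ 2 - (m : ℤ) * B ^ 2 ≠ 2 ∧ A ^ 2 - (m : ℤ) * B ^ 2 ≠ -2 := by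
    intro A B
    rw [hmZ]
    have hpos' : 0 < 2 * j * p := Nat.mul_pos (Nat.mul_pos (by norm_num) hj1) hp1
    exact no_norm_two _ (by exact_mod_cast hpos') A B
  exact not_pid m hsf hm4 hm2 hdio hpid
end

section
/- If p is a prime with p ≡ ±1 (mod 8), n ≥ 1 is an integer, and m = ((2n+1)p)^2 + 2 is square-free, then the class number of Q(√m) is greater than 1. -/
set_option maxHeartbeats 1000000 in
lemma core (p q X Y : ℤ) (hp3 : 3 ≤ p) (hodd : p % 2 = 1) (hpq : p ∣ q)
    (hq : 3 * p ≤ q) (hX : 0 ≤ X) (hY : 1 ≤ Y)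
    (hbig : Y ≤ |q * X - (q ^ 2 + 1) * Y|)
    (h : X ^ 2 - (q ^ 2 + 2) * Y ^ 2 = p ∨ X ^ 2 - (q ^ 2 + 2) * Y ^ 2 = -p) :
    False := by
  have hq9 : 9 ≤ q := by linarith
  have hq0 : (0:ℤ) < q := by linarith
  have hp0 : (0:ℤ) < p := by linarith
  have hY0 : (0:ℤ) ≤ Y := by linarith
  have hqY : q ≤ q * Y := le_mul_of_one_le_right hq0.le hY
  have hY2 : (1:ℤ) ≤ Y ^ 2 := by nlinarith
  have hq2Y2 : (0:ℤ) ≤ q ^ 2 * Y ^ 2 := by positivity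
  have hq2p : (0:ℤ) < q ^ 2 * p := by positivity
  have hA : (0:ℤ) < q * X + (q ^ 2 + 1) * Y := by
    nlinarith [mul_nonneg hq0.le hX, mul_pos (by positivity : (0:ℤ) < q ^ 2 + 1) (by linarith : (0:ℤ) < Y)]
  have hmul : Y * (q * X + (q ^ 2 + 1) * Y)
      ≤ |q * X - (q ^ 2 + 1) * Y| * (q * X + (q ^ 2 + 1) * Y) :=
    mul_le_mul_of_nonneg_right hbig hA.le
  have hqXY : 0 ≤ q * X * Y := mul_nonneg (mul_nonneg hq0.le hX) hY0
  rcases h with h | h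
  · -- ε = 1 : X² = (q²+2)Y² + p
    have key : (q * X - (q ^ 2 + 1) * Y) * (q * X + (q ^ 2 + 1) * Y) = q ^ 2 * p - Y ^ 2 := by
      linear_combination q ^ 2 * h
    have habs : Y * (q * X + (q ^ 2 + 1) * Y) ≤ |q ^ 2 * p - Y ^ 2| := by
      calc Y * (q * X + (q ^ 2 + 1) * Y)
          ≤ |q * X - (q ^ 2 + 1) * Y| * (q * X + (q ^ 2 + 1) * Y) := hmul
        _ = |(q * X - (q ^ 2 + 1) * Y) * (q * X + (q ^ 2 + 1) * Y)| := by
            rw [abs_mul, abs_of_pos hA]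
        _ = |q ^ 2 * p - Y ^ 2| := by rw [key]
    rcases le_or_gt (q ^ 2 * p) (Y ^ 2) with hc | hc
    · rw [abs_of_nonpos (by linarith)] at habs
      linarith
    · rw [abs_of_pos (by linarith)] at habs
      have h1 : q * X * Y + (q ^ 2 + 2) * Y ^ 2 ≤ q ^ 2 * p := by linarith
      have hXlb : q * Y + 1 ≤ X := by
        by_contra hg
        push_neg at hg
        have hsq : X ^ 2 ≤ (q * Y) ^ 2 := pow_le_pow_left₀ hX (by linarith) 2
        nlinarith
      have hYp : 2 * Y ^ 2 + 1 ≤ p := by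
        nlinarith [mul_le_mul_of_nonneg_left hXlb (mul_nonneg hq0.le hY0), sq_nonneg q]
      have hXub : X ≤ q * Y + 1 := by
        by_contra hg
        push_neg at hg
        have hsq : (q * Y + 2) ^ 2 ≤ X ^ 2 := pow_le_pow_left₀ (by positivity) (by linarith) 2
        nlinarith
      have hXeq : X = q * Y + 1 := le_antisymm hXub hXlb
      subst hXeq
      have hdvd : p ∣ 2 * Y ^ 2 - 1 := by
        obtain ⟨s, rfl⟩ := hpq
        exact ⟨2 * s * Y - 1, by linear_combination -h⟩
      have := Int.le_of_dvd (by linarith) hdvd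
      linarith
  · -- ε = -1 : X² = (q²+2)Y² − p
    have key : (q * X - (q ^ 2 + 1) * Y) * (q * X + (q ^ 2 + 1) * Y) = -(q ^ 2 * p + Y ^ 2) := by
      linear_combination q ^ 2 * h
    have habs : Y * (q * X + (q ^ 2 + 1) * Y) ≤ q ^ 2 * p + Y ^ 2 := by
      calc Y * (q * X + (q ^ 2 + 1) * Y)
          ≤ |q * X - (q ^ 2 + 1) * Y| * (q * X + (q ^ 2 + 1) * Y) := hmul
        _ = |(q * X - (q ^ 2 + 1) * Y) * (q * X + (q ^ 2 + 1) * Y)| := by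
            rw [abs_mul, abs_of_pos hA]
        _ = q ^ 2 * p + Y ^ 2 := by
            rw [key, abs_neg, abs_of_pos (by linarith)]
    have h1 : q * X * Y + q ^ 2 * Y ^ 2 ≤ q ^ 2 * p := by linarith
    have hXlb : q * Y ≤ X := by
      by_contra hg
      push_neg at hg
      have hsq : X ^ 2 ≤ (q * Y - 1) ^ 2 := pow_le_pow_left₀ hX (by linarith) 2
      nlinarith
    have hYp : 2 * Y ^ 2 ≤ p := by
      nlinarith [mul_le_mul_of_nonneg_left hXlb (mul_nonneg hq0.le hY0), sq_nonneg q]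
    have hXub : X ≤ q * Y := by
      by_contra hg
      push_neg at hg
      have hsq : (q * Y + 1) ^ 2 ≤ X ^ 2 := pow_le_pow_left₀ (by positivity) (by linarith) 2
      nlinarith
    have hXeq : X = q * Y := le_antisymm hXub hXlb
    subst hXeq
    have hpar : p = 2 * Y ^ 2 := by linear_combination h
    have h2 : (2 * Y ^ 2) % 2 = 0 := Int.mul_emod_right 2 (Y ^ 2)
    rw [hpar] at hodd
    omega

lemma no_solution (p q : ℤ) (hp3 : 3 ≤ p) (hodd : p % 2 = 1) (hprime : Prime p)
    (hpq : p ∣ q) (hq : 3 * p ≤ q) (x y : ℤ) :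
    ¬(x ^ 2 - (q ^ 2 + 2) * y ^ 2 = p ∨ x ^ 2 - (q ^ 2 + 2) * y ^ 2 = -p) := by
  suffices H : ∀ (k : ℕ) (x y : ℤ), y.natAbs = k →
      ¬(x ^ 2 - (q ^ 2 + 2) * y ^ 2 = p ∨ x ^ 2 - (q ^ 2 + 2) * y ^ 2 = -p) from
    H _ x y rfl
  intro k
  induction k using Nat.strong_induction_on with
  | _ k IH =>
    intro x y hk h
    have habs : |x| ^ 2 - (q ^ 2 + 2) * |y| ^ 2 = p ∨ |x| ^ 2 - (q ^ 2 + 2) * |y| ^ 2 = -p := by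
      rwa [sq_abs, sq_abs]
    by_cases hy0 : y = 0
    · subst hy0
      rcases h with h | h
      · exact hprime.not_isSquare ⟨x, by linear_combination -h⟩
      · nlinarith [sq_nonneg x]
    · have hY1 : 1 ≤ |y| := Int.one_le_abs hy0
      set x' := (q ^ 2 + 1) * |x| - q * (q ^ 2 + 2) * |y| with hx'
      set y' := q * |x| - (q ^ 2 + 1) * |y| with hy'
      have hsol' : x' ^ 2 - (q ^ 2 + 2) * y' ^ 2 = p ∨ x' ^ 2 - (q ^ 2 + 2) * y' ^ 2 = -p := by
        rcases habs with h' | h'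
        · exact Or.inl (by rw [hx', hy']; linear_combination h')
        · exact Or.inr (by rw [hx', hy']; linear_combination h')
      rcases lt_or_ge y'.natAbs k with hlt | hge
      · exact IH y'.natAbs hlt x' y' rfl hsol'
      · refine core p q (|x|) (|y|) hp3 hodd hpq hq (abs_nonneg x) hY1 ?_ habs
        have : |y| ≤ |y'| := by
          rw [Int.abs_eq_natAbs, Int.abs_eq_natAbs, hk]
          exact_mod_cast hge
        exact this


open Polynomial

-- any real number a + b √m with b ≠ 0 has the expected minimal polynomial
lemma quad_minpoly (m : ℕ) (hirr : Irrational (Real.sqrt m)) (a b : ℚ) (hb : b ≠ 0) :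
    minpoly ℚ (a + b * Real.sqrt m : ℝ)
      = X ^ 2 - C (2 * a) * X + C (a ^ 2 - m * b ^ 2) := by
  have hs2 : (Real.sqrt m) ^ 2 = (m : ℝ) := Real.sq_sqrt (Nat.cast_nonneg m)
  set t : ℝ := (a : ℝ) + (b : ℝ) * Real.sqrt m with ht
  set g : ℚ[X] := X ^ 2 - C (2 * a) * X + C (a ^ 2 - m * b ^ 2) with hg
  have hgm : g.Monic := by
    have h : g = X ^ 2 + (-(C (2 * a)) * X + C (a ^ 2 - m * b ^ 2)) := by ring
    rw [h]
    apply monic_X_pow_add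
    have hd : (-(C (2 * a)) * X + C (a ^ 2 - (m:ℚ) * b ^ 2)).degree ≤ 1 := by compute_degree
    exact lt_of_le_of_lt hd (by norm_num)
  have hroot : aeval t g = 0 := by
    rw [hg]
    simp only [map_add, map_sub, map_mul, map_pow, aeval_X, aeval_C]
    simp only [eq_ratCast]
    push_cast
    linear_combination (b : ℝ) ^ 2 * hs2
  have hti : Irrational t := by
    rw [ht]
    exact ((hirr.ratCast_mul hb).ratCast_add a)
  have hint : IsIntegral ℚ t := ⟨g, hgm, hroot⟩
  have hdvd : minpoly ℚ t ∣ g := minpoly.dvd ℚ t hroot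
  have hdeg2 : 2 ≤ (minpoly ℚ t).natDegree := by
    rw [minpoly.two_le_natDegree_iff hint]
    rintro ⟨r, hr⟩
    exact hti ⟨r, hr⟩
  have hgdeg : g.natDegree = 2 := by
    have : g = X ^ 2 + (-(C (2 * a)) * X + C (a ^ 2 - m * b ^ 2)) := by ring
    rw [this]
    compute_degree!
  obtain ⟨c, hc⟩ := hdvd
  have hc0 : c ≠ 0 := by
    intro h
    rw [h, mul_zero] at hc
    exact (hgm.ne_zero) hc
  have hdegs : (minpoly ℚ t).natDegree + c.natDegree = 2 := by
    rw [← Polynomial.natDegree_mul (minpoly.ne_zero hint) hc0, ← hc, hgdeg]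
  have hcdeg : c.natDegree = 0 := by omega
  have hcC : c = C (c.coeff 0) := Polynomial.eq_C_of_natDegree_eq_zero hcdeg
  have hlead : c.coeff 0 = 1 := by
    have := congrArg Polynomial.leadingCoeff hc
    rw [Polynomial.leadingCoeff_mul, (minpoly.monic hint).leadingCoeff, one_mul, hgm.leadingCoeff] at this
    rw [hcC] at this ⊢
    simpa using this.symm
  rw [hc, hcC, hlead, map_one, mul_one]

lemma rat_int_of_sq_s12 (m : ℕ) (hsf : Squarefree m) (t : ℚ) (k : ℤ)
    (hk : (m : ℚ) * t ^ 2 = (k : ℚ)) : ∃ T : ℤ, t = (T : ℚ) := by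
  have hden : ((t.den : ℤ)) ^ 2 ∣ (m : ℤ) * t.num ^ 2 := by
    have he : (m : ℤ) * t.num ^ 2 = k * (t.den : ℤ) ^ 2 := by
      have h1 : (t.num : ℚ) = t * (t.den : ℚ) := (Rat.mul_den_eq_num t).symm
      have : ((m : ℤ) * t.num ^ 2 : ℚ) = ((k * (t.den : ℤ) ^ 2 : ℤ) : ℚ) := by
        push_cast
        rw [h1]
        push_cast
        linear_combination (t.den : ℚ)^2 * hk
      exact_mod_cast this
    exact he ▸ Dvd.intro k (by ring)
  have hcop : IsCoprime ((t.den : ℤ) ^ 2) (t.num ^ 2) := by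
    have h : IsCoprime (t.den : ℤ) t.num := by
      rw [Int.isCoprime_iff_gcd_eq_one]
      simpa [Int.gcd, Nat.coprime_comm] using t.reduced
    exact h.pow
  have hdvd : ((t.den : ℤ)) ^ 2 ∣ (m : ℤ) := hcop.dvd_of_dvd_mul_right hden
  have hsfZ : Squarefree (m : ℤ) := Int.squarefree_natCast.mpr hsf
  have : IsUnit ((t.den : ℤ)) := hsfZ _ (by rwa [← sq])
  have hden1 : t.den = 1 := by
    rcases Int.isUnit_iff.mp this with h | h
    · exact_mod_cast h
    · have : (0:ℤ) < (t.den : ℤ) := by exact_mod_cast t.pos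
      omega
  exact ⟨t.num, by rw [← Rat.num_div_den t, hden1]; simp⟩

lemma int_coords (m : ℕ) (hirr : Irrational (Real.sqrt m)) (hsf : Squarefree m)
    (hm4 : m % 4 = 3) (a b : ℚ)
    (hint : IsIntegral ℤ ((a : ℝ) + (b : ℝ) * Real.sqrt m)) :
    ∃ A B : ℤ, a = (A : ℚ) ∧ b = (B : ℚ) := by
  by_cases hb : b = 0
  · subst hb
    have h0 : ((a : ℝ) + (0:ℚ) * Real.sqrt m : ℝ) = algebraMap ℚ ℝ a := by
      push_cast; simp [eq_ratCast]
    rw [h0] at hint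
    have hint' : IsIntegral ℤ a :=
      (isIntegral_algHom_iff (IsScalarTower.toAlgHom ℤ ℚ ℝ)
        (algebraMap ℚ ℝ).injective).mp hint
    obtain ⟨A, hA⟩ := IsIntegrallyClosed.isIntegral_iff.mp hint'
    exact ⟨A, 0, by rw [← hA]; simp, by simp⟩
  · have hmp := quad_minpoly m hirr a b hb
    have heq := minpoly.isIntegrallyClosed_eq_field_fractions ℚ ℝ hint
    simp only [Algebra.algebraMap_self, RingHom.id_apply] at heq
    set P : ℤ[X] := minpoly ℤ ((a : ℝ) + (b : ℝ) * Real.sqrt m) with hP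
    have hmap : P.map (algebraMap ℤ ℚ) = X ^ 2 - C (2 * a) * X + C (a ^ 2 - m * b ^ 2) := by
      rw [← heq, hmp]
    have hc1 : ((P.coeff 1 : ℤ) : ℚ) = -(2 * a) := by
      have h := congrArg (fun f : ℚ[X] => f.coeff 1) hmap
      simp only [coeff_map, eq_intCast, coeff_add, coeff_sub, coeff_X_pow, coeff_C_mul,
        coeff_X_one, coeff_C] at h
      norm_num at h
      linarith [h]
    have hc0 : ((P.coeff 0 : ℤ) : ℚ) = a ^ 2 - m * b ^ 2 := by
      have h := congrArg (fun f : ℚ[X] => f.coeff 0) hmap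
      simp only [coeff_map, eq_intCast, coeff_add, coeff_sub, coeff_X_pow, coeff_C_mul,
        coeff_X_zero, coeff_C] at h
      norm_num at h
      linarith [h]
    set u : ℤ := -(P.coeff 1) with hu
    set v : ℤ := P.coeff 0 with hv
    have hua : ((u : ℤ) : ℚ) = 2 * a := by rw [hu]; push_cast; rw [hc1]; ring
    have hsq : (m : ℚ) * (2 * b) ^ 2 = ((u ^ 2 - 4 * v : ℤ) : ℚ) := by
      push_cast
      rw [hua, hc0]
      ring
    obtain ⟨w, hw⟩ := rat_int_of_sq_s12 m hsf (2 * b) _ hsq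
    -- integer equation u² − m w² = 4 v
    have hZ : u ^ 2 - (m : ℤ) * w ^ 2 = 4 * v := by
      have : ((u ^ 2 - (m : ℤ) * w ^ 2 : ℤ) : ℚ) = ((4 * v : ℤ) : ℚ) := by
        push_cast
        rw [← hw, hua, hc0]
        ring
      exact_mod_cast this
    have hm3 : ((m : ℕ) : ZMod 4) = 3 := by
      have : ((m % 4 : ℕ) : ZMod 4) = ((m : ℕ) : ZMod 4) := ZMod.natCast_mod m 4
      rw [← this, hm4]; rfl
    have hmod : ((u : ZMod 4)) ^ 2 - 3 * ((w : ZMod 4)) ^ 2 = 0 := by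
      have : ((u ^ 2 - (m : ℤ) * w ^ 2 : ℤ) : ZMod 4) = ((4 * v : ℤ) : ZMod 4) := by
        rw [hZ]
      push_cast at this
      rw [hm3] at this
      rw [this, show ((4:ZMod 4)) = 0 from rfl, zero_mul]
    have key : ∀ x y : ZMod 4, x ^ 2 - 3 * y ^ 2 = 0 → x ^ 2 = 0 ∧ y ^ 2 = 0 := by decide
    obtain ⟨hu4, hw4⟩ := key _ _ hmod
    have hu2 : (2 : ℤ) ∣ u := by
      have h4 : (((4:ℕ):ℤ)) ∣ u ^ 2 :=
        (ZMod.intCast_zmod_eq_zero_iff_dvd (u ^ 2) 4).mp (by push_cast; exact hu4)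
      have h4' : (2 : ℤ) ^ 2 ∣ u ^ 2 := by
        refine dvd_trans (dvd_of_eq ?_) h4
        norm_num
      exact (Int.pow_dvd_pow_iff two_ne_zero).mp h4'
    have hw2 : (2 : ℤ) ∣ w := by
      have h4 : (((4:ℕ):ℤ)) ∣ w ^ 2 :=
        (ZMod.intCast_zmod_eq_zero_iff_dvd (w ^ 2) 4).mp (by push_cast; exact hw4)
      have h4' : (2 : ℤ) ^ 2 ∣ w ^ 2 := by
        refine dvd_trans (dvd_of_eq ?_) h4
        norm_num
      exact (Int.pow_dvd_pow_iff two_ne_zero).mp h4'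
    obtain ⟨A, hA⟩ := hu2
    obtain ⟨B, hB⟩ := hw2
    refine ⟨A, B, ?_, ?_⟩
    · have : ((u : ℤ) : ℚ) = 2 * A := by rw [hA]; push_cast; ring
      rw [hua] at this
      linarith [this]
    · have : ((w : ℤ) : ℚ) = 2 * B := by rw [hB]; push_cast; ring
      rw [← hw] at this
      linarith [this]
set_option maxHeartbeats 2000000 in
set_option synthInstance.maxHeartbeats 400000 in
open Polynomial IntermediateField NumberField in
theorem stmt_12 (p n : ℕ) (hp : p.Prime) (hp8 : p % 8 = 1 ∨ p % 8 = 7)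
    (hn : 1 ≤ n)
    (m : ℕ) (hm : m = ((2 * n + 1) * p) ^ 2 + 2) (hsf : Squarefree m)
    (K : IntermediateField ℚ ℝ) (hK : K = ℚ⟮Real.sqrt m⟯) [NumberField K] :
    1 < NumberField.classNumber K := by
  subst hK
  -- basic arithmetic facts
  have hp2 : 2 ≤ p := hp.two_le
  have hpodd : p % 2 = 1 := by omega
  have hp3 : 3 ≤ p := by
    rcases Nat.lt_or_ge p 3 with h | h
    · interval_cases p <;> omega
    · exact h
  set q : ℕ := (2 * n + 1) * p with hq
  have hqodd : q % 2 = 1 := by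
    have h1 : (2 * n + 1) % 2 = 1 := by omega
    rw [hq, Nat.mul_mod, h1, hpodd]
  have hm4 : m % 4 = 3 := by
    obtain ⟨k, hk⟩ : ∃ k, q = 2 * k + 1 := ⟨q / 2, by omega⟩
    have : m = 4 * (k * k + k) + 3 := by rw [hm, hk]; ring
    omega
  have hq3 : 3 * p ≤ q := by
    rw [hq]
    have : 3 ≤ 2 * n + 1 := by omega
    exact Nat.mul_le_mul_right p this
  have hq1 : 1 ≤ q := by omega
  have hmsq : ¬ IsSquare m := by
    rintro ⟨r, hr⟩
    have h1 : q ^ 2 < r * r := by rw [← hr, hm]; omega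
    have h2 : r * r < (q + 1) ^ 2 := by rw [← hr, hm]; nlinarith
    have h3 : q < r := by nlinarith
    have h4 : r < q + 1 := by nlinarith
    omega
  have hirr : Irrational (Real.sqrt m) := irrational_sqrt_natCast_iff.mpr hmsq
  have hs0 : (0:ℝ) ≤ (m:ℝ) := Nat.cast_nonneg m
  have hs2 : Real.sqrt m ^ 2 = (m:ℝ) := Real.sq_sqrt hs0
  set s : ℝ := Real.sqrt m with hsdef
  -- the workhorse: coefficient comparison in ℝ
  have real_eq : ∀ x y u v : ℚ, (x:ℝ) + (y:ℝ) * s = (u:ℝ) + (v:ℝ) * s → x = u ∧ y = v := by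
    intro x y u v h
    by_cases hyv : y = v
    · subst hyv
      constructor
      · have : (x:ℝ) = u := by linarith [h]
        exact_mod_cast this
      · rfl
    · exfalso
      have hyv' : (y:ℝ) - (v:ℝ) ≠ 0 := by
        have h2 : ((y - v : ℚ) : ℝ) ≠ 0 := by exact_mod_cast sub_ne_zero.mpr hyv
        push_cast at h2
        exact h2
      have : s = ((( u - x ) / (y - v) : ℚ) : ℝ) := by
        push_cast
        rw [eq_div_iff hyv']
        linarith [h]
      exact hirr ⟨_, this.symm⟩
  -- integrality of s
  have hsint : IsIntegral ℤ s := by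
    refine ⟨X ^ 2 - C (m:ℤ), ?_, ?_⟩
    · apply monic_X_pow_sub_C _ (by norm_num)
    · simp [hs2]
  have hsQ : IsIntegral ℚ s := hsint.tower_top
  -- minimal polynomial of s
  have hmins : minpoly ℚ s = X ^ 2 - C (m:ℚ) := by
    have h0 : ((0:ℚ):ℝ) + ((1:ℚ):ℝ) * s = s := by norm_num
    calc minpoly ℚ s = minpoly ℚ (((0:ℚ):ℝ) + ((1:ℚ):ℝ) * s) := by rw [h0]
      _ = X ^ 2 - C (2 * 0) * X + C ((0:ℚ) ^ 2 - m * 1 ^ 2) := quad_minpoly m hirr 0 1 one_ne_zero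
      _ = X ^ 2 - C (m:ℚ) := by
          rw [mul_zero, map_zero, zero_mul, sub_zero]
          norm_num
          rfl
  -- power basis
  set pb : PowerBasis ℚ ℚ⟮s⟯ := IntermediateField.adjoin.powerBasis hsQ with hpb
  have hdim : pb.dim = 2 := by
    rw [hpb]
    simp only [IntermediateField.adjoin.powerBasis_dim]
    rw [hmins]
    compute_degree!
  set B : Module.Basis (Fin 2) ℚ ℚ⟮s⟯ := pb.basis.reindex (finCongr hdim) with hBdef
  have hB0 : B 0 = 1 := by
    rw [hBdef, Module.Basis.reindex_apply, PowerBasis.basis_eq_pow]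
    exact pow_zero pb.gen
  have hB1 : B 1 = pb.gen := by
    rw [hBdef, Module.Basis.reindex_apply, PowerBasis.basis_eq_pow]
    exact pow_one pb.gen
  have hgen_coe : ((pb.gen : ℚ⟮s⟯) : ℝ) = s := by
    rw [hpb]
    simp only [IntermediateField.adjoin.powerBasis_gen]
    exact IntermediateField.AdjoinSimple.algebraMap_gen ℚ s
  have coe_comb : ∀ x y : ℚ, ((x • B 0 + y • B 1 : ℚ⟮s⟯) : ℝ) = (x:ℝ) + (y:ℝ) * s := by
    intro x y
    rw [hB0, hB1]
    push_cast [hgen_coe]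
    rw [Rat.smul_def, Rat.smul_def]
    push_cast
    ring
  have expand : ∀ α : ℚ⟮s⟯, α = (B.repr α 0) • B 0 + (B.repr α 1) • B 1 := by
    intro α
    have h := B.sum_repr α
    rw [Fin.sum_univ_two] at h
    exact h.symm
  have hgen2 : pb.gen ^ 2 = algebraMap ℚ ℚ⟮s⟯ (m:ℚ) := by
    apply Subtype.ext
    push_cast [hgen_coe]
    rw [hs2]
  -- conjugation automorphism
  have hming : minpoly ℚ pb.gen = minpoly ℚ s := by
    rw [hpb]
    simp only [IntermediateField.adjoin.powerBasis_gen]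
    exact IntermediateField.minpoly_gen ℚ s
  have hrootσ : Polynomial.aeval (-pb.gen) (minpoly ℚ pb.gen) = 0 := by
    rw [hming, hmins, map_sub, map_pow, aeval_X, aeval_C, neg_pow, hgen2]
    norm_num
  set σ : ℚ⟮s⟯ →ₐ[ℚ] ℚ⟮s⟯ := pb.lift (-pb.gen) hrootσ with hσdef
  have hσgen : σ pb.gen = -pb.gen := pb.lift_gen _ hrootσ
  have conjf : ∀ x y : ℚ, σ (x • B 0 + y • B 1) = x • B 0 - y • B 1 := by
    intro x y
    rw [hB0, hB1, map_add, σ.map_smul_of_tower, σ.map_smul_of_tower, map_one, hσgen, smul_neg, ← sub_eq_add_neg]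
  have normf : ∀ x y : ℚ, (x • B 0 + y • B 1 : ℚ⟮s⟯) * (x • B 0 - y • B 1)
      = algebraMap ℚ ℚ⟮s⟯ (x ^ 2 - (m:ℚ) * y ^ 2) := by
    intro x y
    rw [hB0, hB1]
    simp only [Algebra.smul_def, map_sub, map_mul, map_pow, mul_one]
    linear_combination (-(algebraMap ℚ ℚ⟮s⟯ y) ^ 2) * hgen2
  -- gen is integral over ℤ
  have hcoeInj : Function.Injective (IsScalarTower.toAlgHom ℤ ℚ⟮s⟯ ℝ) := fun u v h =>
    Subtype.coe_injective h
  have hgint : IsIntegral ℤ pb.gen := by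
    rw [← isIntegral_algHom_iff (IsScalarTower.toAlgHom ℤ ℚ⟮s⟯ ℝ) hcoeInj]
    show IsIntegral ℤ ((pb.gen : ℚ⟮s⟯) : ℝ)
    rw [hgen_coe]
    exact hsint
  -- coordinates of algebraic integers are integers
  have coordsO : ∀ δ : 𝓞 ℚ⟮s⟯, ∃ a b : ℤ,
      (δ : ℚ⟮s⟯) = ((a:ℤ):ℚ) • B 0 + ((b:ℤ):ℚ) • B 1 := by
    intro δ
    have h1 : IsIntegral ℤ (δ : ℚ⟮s⟯) := RingOfIntegers.isIntegral_coe δ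
    have h2 : IsIntegral ℤ ((δ : ℚ⟮s⟯) : ℝ) := h1.map (IsScalarTower.toAlgHom ℤ ℚ⟮s⟯ ℝ)
    have hx := expand (δ : ℚ⟮s⟯)
    have hcoe : ((δ : ℚ⟮s⟯) : ℝ)
        = ((B.repr (δ : ℚ⟮s⟯) 0 : ℚ) : ℝ) + ((B.repr (δ : ℚ⟮s⟯) 1 : ℚ) : ℝ) * s := by
      conv_lhs => rw [hx]
      exact coe_comb _ _
    rw [hcoe] at h2
    obtain ⟨A, B', hA, hB'⟩ := int_coords m hirr hsf hm4 _ _ h2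
    exact ⟨A, B', by rw [hx, hA, hB']⟩
  -- integrality of integer combinations
  have smul0 : ∀ x : ℤ, ((x:ℚ)) • (1:ℚ⟮s⟯) = algebraMap ℤ ℚ⟮s⟯ x := by
    intro x
    simp [Algebra.smul_def, eq_intCast]
  have smul1 : ∀ y : ℤ, ((y:ℚ)) • pb.gen = algebraMap ℤ ℚ⟮s⟯ y * pb.gen := by
    intro y
    simp [Algebra.smul_def, eq_intCast]
  have comb_int_add : ∀ x y : ℤ, IsIntegral ℤ (((x:ℚ)) • B 0 + ((y:ℚ)) • B 1 : ℚ⟮s⟯) := by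
    intro x y
    rw [hB0, hB1, smul0, smul1]
    exact isIntegral_algebraMap.add (isIntegral_algebraMap.mul hgint)
  have comb_int_sub : ∀ x y : ℤ, IsIntegral ℤ (((x:ℚ)) • B 0 - ((y:ℚ)) • B 1 : ℚ⟮s⟯) := by
    intro x y
    rw [hB0, hB1, smul0, smul1]
    exact isIntegral_algebraMap.sub (isIntegral_algebraMap.mul hgint)
  -- unit criterion
  have unit_of : ∀ (δ : 𝓞 ℚ⟮s⟯) (a b : ℤ),
      (δ : ℚ⟮s⟯) = ((a:ℤ):ℚ) • B 0 + ((b:ℤ):ℚ) • B 1 →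
      (a ^ 2 - (m:ℤ) * b ^ 2 = 1 ∨ a ^ 2 - (m:ℤ) * b ^ 2 = -1) → IsUnit δ := by
    intro δ a b hδ hpm
    set δ' : 𝓞 ℚ⟮s⟯ := ⟨_, comb_int_sub a b⟩ with hδ'
    have hKeq : (δ : ℚ⟮s⟯) * (δ' : ℚ⟮s⟯)
        = algebraMap ℚ ℚ⟮s⟯ (((a ^ 2 - (m:ℤ) * b ^ 2 : ℤ) : ℚ)) := by
      rw [hδ]
      show _ * (((a:ℤ):ℚ) • B 0 - ((b:ℤ):ℚ) • B 1) = _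
      rw [normf]
      congr 1
      push_cast
      ring
    rcases hpm with h1 | h1
    · refine IsUnit.of_mul_eq_one (a := δ) δ' (RingOfIntegers.eq_iff.mp ?_)
      simp only [RingOfIntegers.coe_eq_algebraMap]
      rw [map_mul, hKeq, h1]
      norm_num
    · refine IsUnit.of_mul_eq_one (a := δ) (-δ') (RingOfIntegers.eq_iff.mp ?_)
      simp only [RingOfIntegers.coe_eq_algebraMap]
      rw [map_mul, RingHom.map_neg, mul_neg, hKeq, h1]
      norm_num
  -- suppose the class number is 1
  by_contra hlt
  push_neg at hlt
  have hone : 0 < NumberField.classNumber ℚ⟮s⟯ := by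
    unfold NumberField.classNumber
    exact Fintype.card_pos
  have hcn1 : NumberField.classNumber ℚ⟮s⟯ = 1 := le_antisymm hlt hone
  haveI hPID : IsPrincipalIdealRing (𝓞 ℚ⟮s⟯) :=
    NumberField.classNumber_eq_one_iff.mp hcn1
  -- a square root of 2 mod p
  haveI : Fact p.Prime := ⟨hp⟩
  obtain ⟨z, hz⟩ := (ZMod.exists_sq_eq_two_iff (p := p) (by omega)).mpr hp8
  set c : ℤ := (z.val : ℤ) with hcdef
  have hmzp : ((m:ℕ) : ZMod p) = 2 := by
    rw [hm, hq]
    push_cast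
    rw [ZMod.natCast_self]
    ring
  have hpc : (p:ℤ) ∣ c ^ 2 - (m:ℤ) := by
    have hcz : ((c : ℤ) : ZMod p) = z := by
      rw [hcdef]
      push_cast
      exact ZMod.natCast_rightInverse z
    have h0 : ((c ^ 2 - (m:ℤ) : ℤ) : ZMod p) = 0 := by
      push_cast
      rw [hcz, hmzp, pow_two, ← hz, sub_self]
    exact (ZMod.intCast_zmod_eq_zero_iff_dvd _ p).mp h0
  obtain ⟨t, ht⟩ := hpc
  -- helper: injectivity via ℝ, and ℚ-scalar coercion
  have hOinj : ∀ u v : 𝓞 ℚ⟮s⟯, ((u : ℚ⟮s⟯) : ℝ) = ((v : ℚ⟮s⟯) : ℝ) → u = v := fun u v h =>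
    NumberField.RingOfIntegers.ext (Subtype.coe_injective h)
  have coe_comb' : ∀ x y : ℚ, ((x • B 0 - y • B 1 : ℚ⟮s⟯) : ℝ) = (x:ℝ) - (y:ℝ) * s := by
    intro x y
    rw [hB0, hB1]
    push_cast [hgen_coe]
    rw [Rat.smul_def, Rat.smul_def]
    push_cast
    ring
  -- the elements c + √m, c - √m and p
  set ξ : 𝓞 ℚ⟮s⟯ := ⟨_, comb_int_add c 1⟩ with hξ
  set ξ' : 𝓞 ℚ⟮s⟯ := ⟨_, comb_int_sub c 1⟩ with hξ'
  set Pp : 𝓞 ℚ⟮s⟯ := ((p:ℕ) : 𝓞 ℚ⟮s⟯) with hPp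
  have hξreal : ((ξ : ℚ⟮s⟯) : ℝ) = (((c:ℤ):ℚ):ℝ) + (((1:ℤ):ℚ):ℝ) * s := coe_comb _ _
  have hξ'real : ((ξ' : ℚ⟮s⟯) : ℝ) = (((c:ℤ):ℚ):ℝ) - (((1:ℤ):ℚ):ℝ) * s := coe_comb' _ _
  have hPpreal : ((Pp : ℚ⟮s⟯) : ℝ) = (p:ℝ) := by
    rw [hPp]
    simp only [RingOfIntegers.coe_eq_algebraMap, map_natCast]
    push_cast
    rfl
  -- p does not divide ξ nor ξ'
  have hndξ : ¬ (Pp ∣ ξ) := by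
    rintro ⟨β, hβ⟩
    obtain ⟨a, b, hab⟩ := coordsO β
    have hβreal : ((β : ℚ⟮s⟯) : ℝ) = (((a:ℤ):ℚ):ℝ) + (((b:ℤ):ℚ):ℝ) * s := by
      rw [hab]; exact coe_comb _ _
    have h1 := congrArg (fun w : 𝓞 ℚ⟮s⟯ => ((w : ℚ⟮s⟯) : ℝ)) hβ
    simp only [RingOfIntegers.coe_eq_algebraMap, map_mul] at h1
    rw [← RingOfIntegers.coe_eq_algebraMap, ← RingOfIntegers.coe_eq_algebraMap,
      ← RingOfIntegers.coe_eq_algebraMap] at h1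
    push_cast at h1
    rw [hξreal, hPpreal, hβreal] at h1
    have hre : (((c:ℤ):ℚ):ℝ) + (((1:ℤ):ℚ):ℝ) * s
        = (((p * a : ℤ):ℚ):ℝ) + (((p * b : ℤ):ℚ):ℝ) * s := by
      push_cast at h1 ⊢
      linear_combination h1
    obtain ⟨h4, h5⟩ := real_eq _ _ _ _ hre
    have h6 : (1 : ℤ) = p * b := by exact_mod_cast h5
    have h7 : (p:ℤ) ≤ 1 := Int.le_of_dvd one_pos ⟨b, h6⟩
    omega
  have hndξ' : ¬ (Pp ∣ ξ') := by
    rintro ⟨β, hβ⟩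
    obtain ⟨a, b, hab⟩ := coordsO β
    have hβreal : ((β : ℚ⟮s⟯) : ℝ) = (((a:ℤ):ℚ):ℝ) + (((b:ℤ):ℚ):ℝ) * s := by
      rw [hab]; exact coe_comb _ _
    have h1 := congrArg (fun w : 𝓞 ℚ⟮s⟯ => ((w : ℚ⟮s⟯) : ℝ)) hβ
    simp only [RingOfIntegers.coe_eq_algebraMap, map_mul] at h1
    rw [← RingOfIntegers.coe_eq_algebraMap, ← RingOfIntegers.coe_eq_algebraMap,
      ← RingOfIntegers.coe_eq_algebraMap] at h1
    push_cast at h1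
    rw [hξ'real, hPpreal, hβreal] at h1
    have hre : (((c:ℤ):ℚ):ℝ) + (((-1:ℤ):ℚ):ℝ) * s
        = (((p * a : ℤ):ℚ):ℝ) + (((p * b : ℤ):ℚ):ℝ) * s := by
      push_cast at h1 ⊢
      linear_combination h1
    obtain ⟨h4, h5⟩ := real_eq _ _ _ _ hre
    have h6 : (-1 : ℤ) = p * b := by exact_mod_cast h5
    have h7 : (p:ℤ) ≤ 1 := Int.le_of_dvd one_pos ⟨-b, by linarith [h6]⟩
    omega
  -- p divides the product
  have hdvdprod : Pp ∣ ξ * ξ' := by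
    refine ⟨((t : ℤ) : 𝓞 ℚ⟮s⟯), hOinj _ _ ?_⟩
    have htr : ((c:ℝ))^2 - (m:ℝ) = (p:ℝ) * (t:ℝ) := by exact_mod_cast congrArg (Int.cast : ℤ → ℝ) ht
    simp only [RingOfIntegers.coe_eq_algebraMap, map_mul, map_intCast]
    rw [← RingOfIntegers.coe_eq_algebraMap, ← RingOfIntegers.coe_eq_algebraMap,
      ← RingOfIntegers.coe_eq_algebraMap]
    push_cast
    rw [hξreal, hξ'real, hPpreal]
    push_cast
    linear_combination htr - hs2
  -- p is neither a unit nor zero nor prime, hence not irreducible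
  have hPpnu : ¬ IsUnit Pp := fun h => hndξ (h.dvd)
  have hPpnp : ¬ Prime Pp := fun hpr => (hpr.2.2 ξ ξ' hdvdprod).elim hndξ hndξ'
  have hPpni : ¬ Irreducible Pp := fun h =>
    hPpnp (UniqueFactorizationMonoid.irreducible_iff_prime.mp h)
  obtain ⟨δ, γ, hδγ, hδu, hγu⟩ : ∃ δ γ, Pp = δ * γ ∧ ¬IsUnit δ ∧ ¬IsUnit γ := by
    by_contra hno
    push_neg at hno
    refine hPpni ⟨hPpnu, fun a b hab => ?_⟩
    by_cases ha : IsUnit a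
    · exact Or.inl ha
    · exact Or.inr (hno a b hab ha)
  obtain ⟨a, b, hab⟩ := coordsO δ
  obtain ⟨a', b', hab'⟩ := coordsO γ
  set NA : ℤ := a ^ 2 - (m:ℤ) * b ^ 2 with hNAdef
  set NB : ℤ := a' ^ 2 - (m:ℤ) * b' ^ 2 with hNBdef
  -- multiplicativity of the norm
  have hNδ : (δ : ℚ⟮s⟯) * σ (δ : ℚ⟮s⟯) = algebraMap ℚ ℚ⟮s⟯ ((NA : ℤ) : ℚ) := by
    rw [hab, conjf, normf]
    congr 1
    rw [hNAdef]
    push_cast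
    ring
  have hNγ : (γ : ℚ⟮s⟯) * σ (γ : ℚ⟮s⟯) = algebraMap ℚ ℚ⟮s⟯ ((NB : ℤ) : ℚ) := by
    rw [hab', conjf, normf]
    congr 1
    rw [hNBdef]
    push_cast
    ring
  have hKδγ : (δ : ℚ⟮s⟯) * (γ : ℚ⟮s⟯) = algebraMap ℚ ℚ⟮s⟯ ((p:ℕ):ℚ) := by
    have h1 := congrArg (fun w : 𝓞 ℚ⟮s⟯ => (w : ℚ⟮s⟯)) hδγ
    simp only [RingOfIntegers.coe_eq_algebraMap, map_mul] at h1
    rw [← h1, map_natCast, map_natCast]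
  have hNmulQ : ((NA * NB : ℤ) : ℚ) = ((p:ℕ):ℚ) ^ 2 := by
    apply (algebraMap ℚ ℚ⟮s⟯).injective
    have h2 : ((δ : ℚ⟮s⟯) * (γ : ℚ⟮s⟯)) * σ ((δ : ℚ⟮s⟯) * (γ : ℚ⟮s⟯))
        = algebraMap ℚ ℚ⟮s⟯ (((NA * NB : ℤ) : ℚ)) := by
      rw [map_mul σ]
      calc ((δ : ℚ⟮s⟯) * (γ : ℚ⟮s⟯)) * (σ (δ : ℚ⟮s⟯) * σ (γ : ℚ⟮s⟯))
          = ((δ : ℚ⟮s⟯) * σ (δ : ℚ⟮s⟯)) * ((γ : ℚ⟮s⟯) * σ (γ : ℚ⟮s⟯)) := by ring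
        _ = algebraMap ℚ ℚ⟮s⟯ ((NA : ℤ) : ℚ) * algebraMap ℚ ℚ⟮s⟯ ((NB : ℤ) : ℚ) := by
            rw [hNδ, hNγ]
        _ = algebraMap ℚ ℚ⟮s⟯ (((NA * NB : ℤ) : ℚ)) := by
            rw [← map_mul]
            push_cast
            ring
    rw [← h2, hKδγ, AlgHom.commutes, ← map_mul]
    congr 1
    ring
  have hNmul : NA * NB = (p:ℤ) ^ 2 := by exact_mod_cast hNmulQ
  -- NA and NB are not ±1
  have hNA1 : ¬ (NA = 1 ∨ NA = -1) := fun h => hδu (unit_of δ a b hab h)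
  have hNB1 : ¬ (NB = 1 ∨ NB = -1) := fun h => hγu (unit_of γ a' b' hab' h)
  -- hence |NA| = p
  have hPz : Prime (p:ℤ) := Nat.prime_iff_prime_int.mp hp
  have hNAdvd : NA.natAbs ∣ p ^ 2 := by
    have h2 := Int.natAbs_dvd_natAbs.mpr (⟨NB, hNmul.symm⟩ : NA ∣ (p:ℤ) ^ 2)
    simpa [Int.natAbs_pow] using h2
  obtain ⟨i, hi, hNAi⟩ := (Nat.dvd_prime_pow hp).mp hNAdvd
  have habs_ne : NA.natAbs ≠ 1 := by
    intro h
    rcases Int.natAbs_eq NA with h' | h'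
    · exact hNA1 (Or.inl (by rw [h', h]; norm_num))
    · exact hNA1 (Or.inr (by rw [h', h]; norm_num))
  have hmulabs : NA.natAbs * NB.natAbs = p ^ 2 := by
    rw [← Int.natAbs_mul, hNmul]
    simp [Int.natAbs_pow]
  have hNAp : NA = (p:ℤ) ∨ NA = -((p:ℤ)) := by
    interval_cases i
    · exact absurd (by simpa using hNAi) habs_ne
    · rcases Int.natAbs_eq NA with h' | h'
      · exact Or.inl (by rw [h', hNAi]; norm_num)
      · exact Or.inr (by rw [h', hNAi]; norm_num)
    · exfalso
      rw [hNAi] at hmulabs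
      have hp2z : 0 < p ^ 2 := by positivity
      have hNB1' : NB.natAbs = 1 :=
        Nat.eq_of_mul_eq_mul_left hp2z (by rw [hmulabs, mul_one])
      rcases Int.natAbs_eq NB with h' | h'
      · exact hNB1 (Or.inl (by rw [h', hNB1']; norm_num))
      · exact hNB1 (Or.inr (by rw [h', hNB1']; norm_num))
  -- contradiction with the descent lemma
  have hmz : (m:ℤ) = ((q:ℕ):ℤ) ^ 2 + 2 := by exact_mod_cast hm
  have hqd : (p:ℤ) ∣ ((q:ℕ):ℤ) := ⟨((2 * n + 1 : ℕ) : ℤ), by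
    rw [hq]; push_cast; ring⟩
  have h3q : 3 * (p:ℤ) ≤ ((q:ℕ):ℤ) := by exact_mod_cast hq3
  refine no_solution (p:ℤ) ((q:ℕ):ℤ) (by exact_mod_cast hp3) (by omega) hPz hqd h3q a b ?_
  rcases hNAp with h' | h'
  · exact Or.inl (by rw [← hmz, ← hNAdef]; exact h')
  · exact Or.inr (by rw [← hmz, ← hNAdef]; exact h')
end

section
/- If p is a prime with p ≡ 1 or 3 (mod 8), p ≠ 3, n ≥ 1 is an integer, and m = ((2n+1)p)^2 - 2 is square-free, then the class number of Q(√m) is greater than 1. -/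
open IntermediateField NumberField

set_option maxHeartbeats 1600000 in
lemma dio_aux (p k : ℤ) (hp : Prime p) (hp2 : 2 < p) (hodd : p % 2 = 1) (hk : 3 * p ≤ k) :
    ∀ N : ℕ, ∀ b a e : ℤ, b.natAbs ≤ N → (e = 1 ∨ e = -1) →
      a ^ 2 - (k ^ 2 - 2) * b ^ 2 ≠ e * p := by
  intro N
  induction N with
  | zero =>
    intro b a e hb he heq
    have hb0 : b = 0 := by omega
    subst hb0
    rcases he with rfl | rfl
    · have h2 : a * a = p := by nlinarith [heq]
      have := hp.2.2 a a ⟨1, by linarith⟩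
      rcases this with h | h <;>
      · obtain ⟨c, rfl⟩ := h
        rcases eq_or_ne c 0 with rfl | hc
        · nlinarith
        · have hc2 : 1 ≤ c ^ 2 := by rcases (by omega : 1 ≤ c ∨ c ≤ -1) with h' | h' <;> nlinarith
          nlinarith [mul_le_mul_of_nonneg_left hc2 (show (0:ℤ) ≤ p * p by positivity)]
    · nlinarith [sq_nonneg a]
  | succ N ih =>
    intro b a e hb he heq
    obtain ⟨A, B, hA0, hB0, hBabs, heq'⟩ :
        ∃ A B : ℤ, 0 ≤ A ∧ 0 ≤ B ∧ B.natAbs = b.natAbs ∧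
          A ^ 2 - (k ^ 2 - 2) * B ^ 2 = e * p :=
      ⟨|a|, |b|, abs_nonneg _, abs_nonneg _, Int.natAbs_abs b,
        by rw [sq_abs, sq_abs]; exact heq⟩
    by_cases hBN : B.natAbs ≤ N
    · exact ih B A e hBN he heq'
    have hB1 : 1 ≤ B := by omega
    have hk3 : 9 ≤ k := by linarith
    have hpe : e * p ≤ p ∧ -p ≤ e * p := by rcases he with rfl | rfl <;> constructor <;> linarith
    -- A < k*B
    have hAkB : A ≤ k * B - 1 := by
      by_contra hcon
      push_neg at hcon
      have h1 : k * B ≤ A := by omega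
      rcases eq_or_lt_of_le h1 with h2 | h2
      · have h3 : e * p = 2 * B ^ 2 := by rw [← h2] at heq'; linear_combination -heq'
        rcases he with rfl | rfl
        · have : (2:ℤ) ∣ p := ⟨B ^ 2, by linarith⟩
          omega
        · nlinarith
      · have h3 : k * B + 1 ≤ A := by omega
        have h4 : (k * B + 1) * (k * B + 1) ≤ A * A :=
          mul_self_le_mul_self (by positivity) h3
        nlinarith [mul_le_mul_of_nonneg_left hB1 (show (0:ℤ) ≤ 2 * k by linarith)]
    -- 2B² ≥ k + e p
    have h2B : k + e * p ≤ 2 * B ^ 2 := by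
      nlinarith [mul_le_mul_of_nonneg_left hAkB hA0]
    -- kA > (k²-2)B
    have hkA : (k ^ 2 - 2) * B + 1 ≤ k * A := by
      have key : ((k ^ 2 - 2) * B) ^ 2 < (k * A) ^ 2 := by
        have e1 : (k * A) ^ 2 - ((k ^ 2 - 2) * B) ^ 2
            = 2 * (k ^ 2 - 2) * B ^ 2 + k ^ 2 * (e * p) := by linear_combination k ^ 2 * heq'
        have e2 : (k ^ 2 - 2) * (k + e * p) ≤ 2 * (k ^ 2 - 2) * B ^ 2 :=
          by nlinarith [mul_le_mul_of_nonneg_left h2B (show (0:ℤ) ≤ k ^ 2 - 2 by nlinarith)]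
        rcases he with rfl | rfl
        · nlinarith
        · nlinarith [mul_le_mul_of_nonneg_left hk (show (0:ℤ) ≤ 2 * k ^ 2 - 2 by nlinarith)]
      by_contra hcon
      push_neg at hcon
      have h5 : (k * A) * (k * A) ≤ ((k ^ 2 - 2) * B) * ((k ^ 2 - 2) * B) := by
        have h6 : k * A ≤ (k ^ 2 - 2) * B := by linarith
        exact mul_self_le_mul_self (by positivity) h6
      nlinarith
    set b' := B * (k ^ 2 - 1) - A * k with hb'
    set a' := A * (k ^ 2 - 1) - B * k * (k ^ 2 - 2) with ha'
    have heq2 : a' ^ 2 - (k ^ 2 - 2) * b' ^ 2 = e * p := by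
      rw [ha', hb']; linear_combination heq'
    have hlt1 : -B < b' := by
      rw [hb']
      nlinarith [mul_le_mul_of_nonneg_right hAkB (show (0:ℤ) ≤ k by linarith)]
    have hlt2 : b' ≤ B - 1 := by rw [hb']; nlinarith
    clear_value b' a'
    have hbn : b'.natAbs ≤ N := by omega
    exact ih b' a' e hbn he heq2

open IntermediateField NumberField Polynomial

section Quad

variable {m : ℕ} {α : ℝ} {K : IntermediateField ℚ ℝ}

lemma sqf_rat_int (hm : Squarefree m) (q : ℚ) (c : ℤ) (h : (m : ℚ) * q ^ 2 = c) :
    ∃ B : ℤ, (B : ℚ) = q := by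
  have hden : (q.den : ℚ) ≠ 0 := Nat.cast_ne_zero.2 q.den_nz
  have h2' : (m : ℚ) * ((q.num : ℚ) / (q.den : ℚ)) ^ 2 = c := by
    rw [Rat.num_div_den]; exact h
  have h2'' : ((m : ℤ) * q.num ^ 2 : ℚ) = ((c * (q.den : ℤ) ^ 2 : ℤ) : ℚ) := by
    push_cast
    field_simp at h2'
    rw [mul_comm (c : ℚ)]
    exact_mod_cast h2'
  have h3 : (m : ℤ) * q.num ^ 2 = c * (q.den : ℤ) ^ 2 := by exact_mod_cast h2''
  have h4 : ((q.den ^ 2 : ℕ) : ℤ) ∣ ((m * q.num.natAbs ^ 2 : ℕ) : ℤ) := by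
    push_cast
    rw [sq_abs]
    exact ⟨c, by linarith⟩
  have h5 : q.den ^ 2 ∣ m * q.num.natAbs ^ 2 := by exact_mod_cast h4
  have h6 : q.den ^ 2 ∣ m :=
    (Nat.Coprime.pow _ _ (Nat.Coprime.symm q.reduced)).dvd_of_dvd_mul_right h5
  have h7 : IsUnit q.den := hm q.den (by rwa [← sq] )
  have h8 : q.den = 1 := Nat.isUnit_iff.mp h7
  refine ⟨q.num, ?_⟩
  rw [← Rat.num_div_den q, h8]
  simp

lemma decomp_exists (hα : α ^ 2 = m) (hK : K = ℚ⟮α⟯) (x : K) :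
    ∃ a b : ℚ, (x : ℝ) = a + b * α := by
  have hint : IsIntegral ℚ α :=
    ⟨X ^ 2 - C (m : ℚ), by monicity!, by simp [hα]⟩
  have hsub : (ℚ⟮α⟯).toSubalgebra = Algebra.adjoin ℚ {α} :=
    adjoin_simple_toSubalgebra_of_isAlgebraic hint.isAlgebraic
  have hx : (x : ℝ) ∈ Algebra.adjoin ℚ {α} := by
    rw [← hsub]
    exact hK ▸ x.2
  clear hK
  revert hx
  generalize (x : ℝ) = y
  intro hx
  induction hx using Algebra.adjoin_induction with
  | mem y hy =>
    rw [Set.mem_singleton_iff] at hy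
    exact ⟨0, 1, by simp [hy]⟩
  | algebraMap r => exact ⟨r, 0, by rw [eq_ratCast (algebraMap ℚ ℝ) r]; ring⟩
  | add y z hy hz ihy ihz =>
    obtain ⟨a, b, rfl⟩ := ihy
    obtain ⟨c, d, rfl⟩ := ihz
    exact ⟨a + c, b + d, by push_cast; ring⟩
  | mul y z hy hz ihy ihz =>
    obtain ⟨a, b, rfl⟩ := ihy
    obtain ⟨c, d, rfl⟩ := ihz
    refine ⟨a * c + b * d * m, a * d + b * c, ?_⟩
    push_cast
    linear_combination ((b : ℝ) * d) * hα

lemma decomp_unique (hirr : Irrational α) {a b c d : ℚ}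
    (h : (a : ℝ) + b * α = c + d * α) : a = c ∧ b = d := by
  by_cases hbd : b = d
  · subst hbd
    have : (a : ℝ) = c := by linarith [h]
    exact ⟨by exact_mod_cast this, rfl⟩
  · exfalso
    have hbd' : ((b - d : ℚ) : ℝ) ≠ 0 := by
      exact_mod_cast sub_ne_zero.2 hbd
    have : α = (((c - a) / (b - d) : ℚ) : ℝ) := by
      push_cast
      push_cast at hbd'
      rw [eq_div_iff hbd']
      linarith [h]
    exact hirr ⟨(c - a) / (b - d), this.symm⟩

end Quad

section Int

variable {m : ℕ} {α : ℝ} {K : IntermediateField ℚ ℝ}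

lemma ratCoe_K (a : ℚ) : ((algebraMap ℚ K a : K) : ℝ) = (a : ℝ) := by
  rw [show ((algebraMap ℚ K a : K) : ℝ) = algebraMap ℚ ℝ a from rfl, eq_ratCast]

lemma coeffs_int (hα : α ^ 2 = m) (hirr : Irrational α) [NumberField K]
    (x : 𝓞 K) {a b : ℚ} (hxab : ((x : K) : ℝ) = a + b * α) :
    ∃ A N : ℤ, (A : ℚ) = 2 * a ∧ (N : ℚ) = a ^ 2 - m * b ^ 2 := by
  have hxint : IsIntegral ℤ (x : K) := RingOfIntegers.isIntegral_coe x
  by_cases hb : b = 0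
  · subst hb
    have hxa : (x : K) = algebraMap ℚ K a := by
      apply Subtype.ext
      rw [show ((algebraMap ℚ K a : K) : ℝ) = (a : ℝ) from ratCoe_K a]
      simpa using hxab
    rw [hxa] at hxint
    have h1 : IsIntegral ℤ a :=
      (isIntegral_algebraMap_iff (R := ℤ) (A := ℚ) (B := ↥K)
        (algebraMap ℚ ↥K).injective).mp hxint
    obtain ⟨y, hy⟩ := IsIntegrallyClosed.isIntegral_iff.mp h1
    refine ⟨2 * y, y ^ 2, ?_, ?_⟩
    · push_cast
      rw [show ((y : ℚ)) = a from hy]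
    · push_cast
      rw [show ((y : ℚ)) = a from hy]
      ring
  · set q : Polynomial ℚ := Polynomial.X ^ 2 + Polynomial.C (-(2 * a)) * Polynomial.X
      + Polynomial.C (a ^ 2 - m * b ^ 2) with hqdef
    have hq0 : Polynomial.aeval (x : K) q = 0 := by
      have hinj : Function.Injective (K.val : K →ₐ[ℚ] ℝ) := K.val.toRingHom.injective
      apply hinj
      erw [map_zero, ← Polynomial.aeval_algHom_apply K.val]
      have hvx : (K.val (x : K) : ℝ) = a + b * α := hxab
      rw [hqdef]
      simp only [map_sub, map_add, map_mul, map_pow, Polynomial.aeval_X, Polynomial.aeval_C, hvx]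
      simp only [eq_ratCast]
      push_cast
      linear_combination ((b : ℝ)) ^ 2 * hα
    have hmonic : q.Monic := by rw [hqdef]; monicity!
    have hdeg : q.natDegree = 2 := by rw [hqdef]; compute_degree!
    have hxintQ : IsIntegral ℚ (x : K) := hxint.tower_top
    have hdvd : minpoly ℚ (x : K) ∣ q := minpoly.dvd ℚ _ hq0
    have hnotrange : (x : K) ∉ (algebraMap ℚ K).range := by
      rintro ⟨r, hr⟩
      have : (r : ℝ) + ((0 : ℚ) : ℝ) * α = a + b * α := by
        rw [← ratCoe_K (K := K) r, hr, hxab]; norm_num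
      exact hb ((decomp_unique hirr this).2.symm)
    have h2le : 2 ≤ (minpoly ℚ (x : K)).natDegree :=
      (minpoly.two_le_natDegree_iff hxintQ).2 hnotrange
    have hqne : q ≠ 0 := hmonic.ne_zero
    obtain ⟨c, hc⟩ := hdvd
    have hmne : minpoly ℚ (x : K) ≠ 0 := minpoly.ne_zero hxintQ
    have hcne : c ≠ 0 := by rintro rfl; simp at hc; exact hqne hc
    have hdegs : (minpoly ℚ (x : K)).natDegree + c.natDegree = 2 := by
      rw [← Polynomial.natDegree_mul hmne hcne, ← hc, hdeg]
    have hcdeg : c.natDegree = 0 := by omega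
    have hclead : c.leadingCoeff = 1 := by
      have := hmonic
      rw [hc] at this
      have h5 : (minpoly ℚ (x : K)).leadingCoeff * c.leadingCoeff = 1 := by
        rw [← Polynomial.leadingCoeff_mul]; exact this
      have h6 : (minpoly ℚ (x : K)).leadingCoeff = 1 := minpoly.monic hxintQ
      rw [h6, one_mul] at h5; exact h5
    have hc1 : c = 1 := Polynomial.eq_one_of_monic_natDegree_zero hclead hcdeg
    have heqq : minpoly ℚ (x : K) = q := by rw [hc, hc1, mul_one]
    have hmap : minpoly ℚ (x : K) = (minpoly ℤ (x : K)).map (algebraMap ℤ ℚ) :=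
      minpoly.isIntegrallyClosed_eq_field_fractions' ℚ hxint
    refine ⟨-((minpoly ℤ (x : K)).coeff 1), (minpoly ℤ (x : K)).coeff 0, ?_, ?_⟩
    · have h7 : (minpoly ℚ (x : K)).coeff 1 = ((minpoly ℤ (x : K)).coeff 1 : ℚ) := by
        rw [hmap, Polynomial.coeff_map]; rfl
      have h8 : q.coeff 1 = -(2 * a) := by
        rw [hqdef]
        simp only [Polynomial.coeff_add, Polynomial.coeff_X_pow, Polynomial.coeff_C_mul,
          Polynomial.coeff_X, Polynomial.coeff_C]
        norm_num
      rw [heqq, h8] at h7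
      push_cast
      linarith [h7]
    · have h7 : (minpoly ℚ (x : K)).coeff 0 = ((minpoly ℤ (x : K)).coeff 0 : ℚ) := by
        rw [hmap, Polynomial.coeff_map]; rfl
      have h8 : q.coeff 0 = a ^ 2 - m * b ^ 2 := by
        rw [hqdef]
        simp only [Polynomial.coeff_add, Polynomial.coeff_X_pow, Polynomial.coeff_C_mul,
          Polynomial.coeff_X, Polynomial.coeff_C]
        norm_num
      rw [heqq, h8] at h7
      exact h7.symm

end Int

section Unit

variable {m : ℕ} {α : ℝ} {K : IntermediateField ℚ ℝ}

lemma mem_ab (hK : K = ℚ⟮α⟯) (a b : ℚ) : (a : ℝ) + b * α ∈ K := by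
  have hαK : α ∈ K := hK ▸ IntermediateField.mem_adjoin_simple_self ℚ α
  have h1 : (a : ℝ) ∈ K := by
    have := K.algebraMap_mem a
    rwa [eq_ratCast] at this
  have h2 : (b : ℝ) ∈ K := by
    have := K.algebraMap_mem b
    rwa [eq_ratCast] at this
  exact add_mem h1 (mul_mem h2 hαK)

lemma integral_of_quad (hα : α ^ 2 = m) {a b : ℚ} {A N : ℤ}
    (hA : (A : ℚ) = 2 * a) (hN : (N : ℚ) = a ^ 2 - m * b ^ 2)
    (y : K) (hy : (y : ℝ) = a - b * α) : IsIntegral ℤ y := by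
  refine ⟨Polynomial.X ^ 2 + Polynomial.C (-A) * Polynomial.X + Polynomial.C N, by monicity!, ?_⟩
  have hinj : Function.Injective (K.val.toRingHom.toIntAlgHom : K →ₐ[ℤ] ℝ) :=
    K.val.toRingHom.injective
  have h0 : Polynomial.aeval y
      (Polynomial.X ^ 2 + Polynomial.C (-A) * Polynomial.X + Polynomial.C N) = 0 := by
    apply hinj
    rw [map_zero, ← Polynomial.aeval_algHom_apply (K.val.toRingHom.toIntAlgHom : K →ₐ[ℤ] ℝ)]
    have hvy : (K.val.toRingHom.toIntAlgHom : K →ₐ[ℤ] ℝ) y = a - b * α := hy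
    simp only [map_add, map_mul, map_pow, Polynomial.aeval_X, Polynomial.aeval_C, hvy]
    have hAr : ((A : ℝ)) = 2 * (a : ℝ) := by exact_mod_cast hA
    have hNr : ((N : ℝ)) = (a : ℝ) ^ 2 - m * (b : ℝ) ^ 2 := by exact_mod_cast hN
    have hcA : (algebraMap ℤ ℝ) (-A) = ((-A : ℤ) : ℝ) := by simp
    have hcN : (algebraMap ℤ ℝ) N = ((N : ℤ) : ℝ) := by simp
    rw [hcA, hcN]
    push_cast
    rw [hAr, hNr]
    linear_combination ((b : ℝ)) ^ 2 * hα
  exact h0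

lemma isUnit_of_norm (hα : α ^ 2 = m) [NumberField K] (x z : 𝓞 K) {a b : ℚ}
    (hxab : ((x : K) : ℝ) = a + b * α) (hz : ((z : K) : ℝ) = a - b * α)
    (h1 : a ^ 2 - m * b ^ 2 = 1 ∨ a ^ 2 - m * b ^ 2 = -1) : IsUnit x := by
  have hprod : ((( x * z : 𝓞 K) : K) : ℝ) = ((a ^ 2 - m * b ^ 2 : ℚ) : ℝ) := by
    rw [show ((( x * z : 𝓞 K) : K) : ℝ) = ((x : K) : ℝ) * ((z : K) : ℝ) by push_cast; rfl]
    rw [hxab, hz]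
    push_cast
    linear_combination (-(b:ℝ)^2) * hα
  rcases h1 with h1 | h1
  · refine IsUnit.of_mul_eq_one (a := x) z ?_
    apply NumberField.RingOfIntegers.ext
    apply Subtype.ext
    rw [show (((1 : 𝓞 K) : K) : ℝ) = 1 by push_cast; rfl]
    rw [hprod, h1]
    norm_num
  · refine IsUnit.of_mul_eq_one (a := x) (-z) ?_
    apply NumberField.RingOfIntegers.ext
    apply Subtype.ext
    rw [show (((x * -z : 𝓞 K)) : K) = -((x * z : 𝓞 K) : K) by push_cast; ring]
    rw [show (((1 : 𝓞 K) : K) : ℝ) = 1 by push_cast; rfl]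
    rw [show ((-((x * z : 𝓞 K) : K) : K) : ℝ) = -(((x * z : 𝓞 K) : K) : ℝ) by push_cast; rfl]
    rw [hprod, h1]
    norm_num

end Unit

open IntermediateField NumberField

set_option maxHeartbeats 2000000 in
theorem stmt_13 (p n : ℕ) (hp : p.Prime) (hp8 : p % 8 = 1 ∨ p % 8 = 3)
    (hp3 : p ≠ 3) (hn : 1 ≤ n)
    (m : ℕ) (hm : (m : ℤ) = ((2 * (n : ℤ) + 1) * p) ^ 2 - 2) (hsf : Squarefree m)
    (K : IntermediateField ℚ ℝ) (hK : K = ℚ⟮Real.sqrt m⟯) [NumberField K] :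
    1 < NumberField.classNumber K := by
  set α := Real.sqrt m with hαdef
  set k : ℤ := (2 * (n : ℤ) + 1) * p with hkdef
  have hp5 : 5 ≤ p := by have := hp.two_le; omega
  have hpodd : p % 2 = 1 := by omega
  have hn1 : (1 : ℤ) ≤ n := by exact_mod_cast hn
  have hppos : (0 : ℤ) < p := by exact_mod_cast hp.pos
  have hp5' : (5 : ℤ) ≤ p := by exact_mod_cast hp5
  have hk3 : 3 * (p : ℤ) ≤ k := by rw [hkdef]; nlinarith
  have hk15 : (15 : ℤ) ≤ k := by linarith
  have hm2 : (2 : ℤ) ≤ m := by rw [hm]; nlinarith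
  have hmpos : (0 : ℝ) ≤ (m : ℝ) := by positivity
  have hα : α ^ 2 = (m : ℝ) := Real.sq_sqrt hmpos
  have hnotsq : ¬ IsSquare m := by
    rintro ⟨s, hs⟩
    have hsz : (m : ℤ) = (s : ℤ) * s := by exact_mod_cast hs
    have hs0 : (0 : ℤ) ≤ s := by positivity
    have h1 : (s : ℤ) < k := by
      by_contra hcon
      push_neg at hcon
      have := mul_self_le_mul_self (by linarith : (0:ℤ) ≤ k) hcon
      rw [hm] at hsz
      nlinarith
    have h2 : k - 1 < (s : ℤ) := by
      by_contra hcon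
      push_neg at hcon
      have := mul_self_le_mul_self hs0 hcon
      rw [hm] at hsz
      nlinarith
    omega
  have hirr : Irrational α := irrational_sqrt_natCast_iff.2 hnotsq
  have hαK : α ∈ K := hK ▸ IntermediateField.mem_adjoin_simple_self ℚ α
  by_contra hcl
  push_neg at hcl
  have hpos : 0 < NumberField.classNumber K := by
    unfold NumberField.classNumber; exact Fintype.card_pos
  have hPID : IsPrincipalIdealRing (𝓞 K) :=
    NumberField.classNumber_eq_one_iff.mp (by omega)
  have hpcoeK : (((p : 𝓞 K) : K) : ℝ) = ((p : ℚ) : ℝ) := by push_cast; rfl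
  -- denominator bound: any y in 𝓞 K with p*y having α-coefficient 1 is impossible unless p ∣ 2
  have hden : ∀ y : 𝓞 K, ∀ c d : ℚ, ((y : K) : ℝ) = c + d * α → (p : ℚ) * d = 1 → False := by
    intro y c d hcd hpd
    obtain ⟨A, N, hA, hN⟩ := coeffs_int hα hirr y hcd
    have hQ : (m : ℚ) * (2 * d) ^ 2 = ((A ^ 2 - 4 * N : ℤ) : ℚ) := by
      push_cast
      linear_combination (-(A + 2 * c)) * hA + 4 * hN
    obtain ⟨B, hB⟩ := sqf_rat_int hsf (2 * d) (A ^ 2 - 4 * N) hQ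
    have hpB : (p : ℤ) * B = 2 := by
      have : ((p * B : ℤ) : ℚ) = ((2 : ℤ) : ℚ) := by
        push_cast
        rw [hB]
        linear_combination 2 * hpd
      exact_mod_cast this
    have h2 : (p : ℤ) ∣ 2 := ⟨B, hpB.symm⟩
    have := Int.le_of_dvd (by norm_num) h2
    omega
  -- p is not a unit
  have hpunit : ¬ IsUnit ((p : ℕ) : 𝓞 K) := by
    intro h
    obtain ⟨u, hu⟩ := h.exists_right_inv
    obtain ⟨c, d, hcd⟩ := decomp_exists hα hK (u : K)
    have hre : ((p * c : ℚ) : ℝ) + ((p * d : ℚ) : ℝ) * α = ((1 : ℚ) : ℝ) + ((0 : ℚ) : ℝ) * α := by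
      have h0 := congrArg (fun z : 𝓞 K => ((z : K) : ℝ)) hu
      rw [show (((p : 𝓞 K) * u : 𝓞 K) : K) = ((p : 𝓞 K) : K) * (u : K) by push_cast; rfl] at h0
      rw [show ((((p : 𝓞 K) : K) * (u : K) : K) : ℝ)
        = (((p : 𝓞 K) : K) : ℝ) * ((u : K) : ℝ) by push_cast; rfl] at h0
      rw [hpcoeK, hcd] at h0
      rw [show (((1 : 𝓞 K) : K) : ℝ) = 1 by push_cast; rfl] at h0
      push_cast
      push_cast at h0
      linear_combination h0
    obtain ⟨h1, h2⟩ := decomp_unique hirr hre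
    obtain ⟨A, N, hA, hN⟩ := coeffs_int hα hirr u hcd
    have hpA : (p : ℤ) * A = 2 := by
      have : ((p * A : ℤ) : ℚ) = ((2 : ℤ) : ℚ) := by
        push_cast
        rw [hA]
        linear_combination 2 * h1
      exact_mod_cast this
    have h3 : (p : ℤ) ∣ 2 := ⟨A, hpA.symm⟩
    have := Int.le_of_dvd (by norm_num) h3
    omega
  -- the element θ = √m of 𝓞 K
  set θK : K := ⟨α, hαK⟩ with hθKdef
  have hθint : IsIntegral ℤ θK :=
    integral_of_quad (a := 0) (b := -1) (A := 0) (N := -(m:ℤ)) hα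
      (by norm_num) (by push_cast; ring) θK (by rw [hθKdef]; push_cast; ring)
  set θ : 𝓞 K := ⟨θK, hθint⟩ with hθdef
  -- p is not prime in 𝓞 K
  have hpprime : ¬ Prime ((p : ℕ) : 𝓞 K) := by
    intro hpr
    haveI : Fact p.Prime := ⟨hp⟩
    obtain ⟨r, hr⟩ := (ZMod.exists_sq_eq_neg_two_iff (p := p) (by omega)).2 hp8
    set t : ℤ := (r.val : ℤ) with htdef
    have hdvdt : (p : ℤ) ∣ t ^ 2 - m := by
      rw [← ZMod.intCast_zmod_eq_zero_iff_dvd]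
      push_cast
      have h1 : ((t : ZMod p)) = r := by
        rw [htdef]; push_cast; simp [ZMod.natCast_val, ZMod.cast_id]
      have h2 : ((m : ZMod p)) = -2 := by
        have h3 : ((m : ℤ) : ZMod p) = ((((2 * (n : ℤ) + 1) * p) ^ 2 - 2 : ℤ) : ZMod p) := by
          rw [hm]
        push_cast at h3
        rw [show ((p : ZMod p)) = 0 from ZMod.natCast_self p] at h3
        simpa using h3
      rw [h1, h2, sq, ← hr]
      ring
    obtain ⟨s, hst⟩ := hdvdt
    have hfac : ((p : ℕ) : 𝓞 K) ∣ (θ - (t : 𝓞 K)) * (θ + (t : 𝓞 K)) := by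
      refine ⟨((-s : ℤ) : 𝓞 K), ?_⟩
      apply NumberField.RingOfIntegers.ext
      apply Subtype.ext
      have lhs : (((((θ - (t : 𝓞 K)) * (θ + (t : 𝓞 K))) : 𝓞 K) : K) : ℝ)
          = (α - (t : ℝ)) * (α + (t : ℝ)) := by push_cast; rfl
      have rhs : (((((p : ℕ) : 𝓞 K) * ((-s : ℤ) : 𝓞 K) : 𝓞 K) : K) : ℝ)
          = (p : ℝ) * (-(s : ℝ)) := by push_cast [map_intCast]; ring
      rw [lhs, rhs]
      have hst' : ((t:ℝ)) ^ 2 - (m : ℝ) = (p : ℝ) * (s : ℝ) := by exact_mod_cast hst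
      linear_combination hα - hst'
    rcases hpr.2.2 _ _ hfac with hdvd1 | hdvd1 <;>
    · obtain ⟨y, hy⟩ := hdvd1
      obtain ⟨c, d, hcd⟩ := decomp_exists hα hK (y : K)
      have hre := congrArg (fun z : 𝓞 K => ((z : K) : ℝ)) hy
      rw [show ((((p : 𝓞 K) * y : 𝓞 K)) : K) = ((p : 𝓞 K) : K) * (y : K) by push_cast; rfl] at hre
      rw [show ((((p : 𝓞 K) : K) * (y : K) : K) : ℝ)
        = (((p : 𝓞 K) : K) : ℝ) * ((y : K) : ℝ) by push_cast; rfl] at hre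
      rw [hpcoeK, hcd] at hre
      first
      | (rw [show (((θ - (t : 𝓞 K) : 𝓞 K) : K) : ℝ) = α - (t : ℝ) by push_cast; rfl] at hre)
      | (rw [show (((θ + (t : 𝓞 K) : 𝓞 K) : K) : ℝ) = α + (t : ℝ) by push_cast; rfl] at hre)
      · obtain ⟨e, hre2⟩ : ∃ e : ℚ, ((e : ℚ) : ℝ) + ((1:ℚ) : ℝ) * α
            = ((p * c : ℚ) : ℝ) + ((p * d : ℚ) : ℝ) * α := by
          first
          | exact ⟨-(t : ℚ), by push_cast; push_cast at hre; linarith [hre]⟩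
          | exact ⟨(t : ℚ), by push_cast; push_cast at hre; linarith [hre]⟩
        have hd := (decomp_unique hirr hre2).2
        exact hden y c d hcd hd.symm
  -- p is not irreducible, so it factors
  have hirred : ¬ Irreducible ((p : ℕ) : 𝓞 K) := fun h =>
    hpprime ((UniqueFactorizationMonoid.irreducible_iff_prime).mp h)
  rw [irreducible_iff] at hirred
  push_neg at hirred
  obtain ⟨x, y, hxy, hxu, hyu⟩ := hirred hpunit
  obtain ⟨a, b, hab⟩ := decomp_exists hα hK (x : K)
  obtain ⟨c, d, hcd⟩ := decomp_exists hα hK (y : K)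
  obtain ⟨A₁, N₁, hA₁, hN₁⟩ := coeffs_int hα hirr x hab
  obtain ⟨A₂, N₂, hA₂, hN₂⟩ := coeffs_int hα hirr y hcd
  -- product decomposition
  have hre : (((a * c + b * d * m : ℚ)) : ℝ) + ((a * d + b * c : ℚ) : ℝ) * α
      = ((p : ℚ) : ℝ) + ((0 : ℚ) : ℝ) * α := by
    have h0 := congrArg (fun z : 𝓞 K => ((z : K) : ℝ)) hxy
    rw [hpcoeK] at h0
    rw [show (((x * y : 𝓞 K) : K) : ℝ) = ((x : K) : ℝ) * ((y : K) : ℝ) by push_cast; rfl,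
      hab, hcd] at h0
    push_cast
    push_cast at h0
    linear_combination -h0 - (b : ℝ) * (d : ℝ) * hα
  obtain ⟨hsum, hcross⟩ := decomp_unique hirr hre
  -- multiplicativity of norms
  have hNN : N₁ * N₂ = (p : ℤ) ^ 2 := by
    have h0 : ((N₁ * N₂ : ℤ) : ℚ) = (((p : ℤ) ^ 2 : ℤ) : ℚ) := by
      push_cast
      rw [hN₁, hN₂]
      linear_combination ((a * c + (m:ℚ) * b * d + p)) * hsum - (m:ℚ) * (a * d + b * c) * hcross
    exact_mod_cast h0
  -- units from norm ±1
  have mkunit : ∀ (w : 𝓞 K) (aw bw : ℚ) (Aw Nw : ℤ), ((w : K) : ℝ) = aw + bw * α →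
      (Aw : ℚ) = 2 * aw → (Nw : ℚ) = aw ^ 2 - m * bw ^ 2 → (Nw = 1 ∨ Nw = -1) → IsUnit w := by
    intro w aw bw Aw Nw hw hAw hNw hNw1
    have hconjmem : (aw : ℝ) - bw * α ∈ K := by
      have h0 := mem_ab (α := α) hK aw (-bw)
      rw [show (((-bw : ℚ)) : ℝ) = -(bw : ℝ) by push_cast; ring] at h0
      rw [show (aw : ℝ) + -(bw : ℝ) * α = (aw : ℝ) - bw * α by ring] at h0
      exact h0
    set zK : K := ⟨(aw : ℝ) - bw * α, hconjmem⟩ with hzKdef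
    have hzint : IsIntegral ℤ zK := integral_of_quad hα hAw hNw zK rfl
    refine isUnit_of_norm hα w ⟨zK, hzint⟩ hw rfl ?_
    rcases hNw1 with h | h <;> [left; right] <;>
      (rw [← hNw, h]; push_cast; ring)
  have hxunit : ∀ e : ℤ, N₁ = e → (e = 1 ∨ e = -1) → False := by
    rintro e rfl he
    exact hxu (mkunit x a b A₁ N₁ hab hA₁ hN₁ he)
  have hyunit : ∀ e : ℤ, N₂ = e → (e = 1 ∨ e = -1) → False := by
    rintro e rfl he
    exact hyu (mkunit y c d A₂ N₂ hcd hA₂ hN₂ he)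
  -- N₁ = ± p
  have hN₁sign : N₁ = p ∨ N₁ = -p := by
    have h1 : N₁.natAbs ∣ p ^ 2 := by
      have h2 : N₁ ∣ (p : ℤ) ^ 2 := ⟨N₂, hNN.symm⟩
      have h3 := Int.natAbs_dvd_natAbs.2 h2
      rwa [Int.natAbs_pow, Int.natAbs_natCast] at h3
    obtain ⟨i, hi2, hieq⟩ := (Nat.dvd_prime_pow hp).mp h1
    interval_cases i
    · exfalso
      have h4 : N₁ = 1 ∨ N₁ = -1 := by
        rcases Int.natAbs_eq N₁ with h | h <;> rw [hieq] at h <;> simp at h <;> [left; right] <;>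
          omega
      rcases h4 with h | h
      · exact hxunit 1 h (Or.inl rfl)
      · exact hxunit (-1) h (Or.inr rfl)
    · rw [pow_one] at hieq
      rcases Int.natAbs_eq N₁ with h | h <;> rw [hieq] at h
      · left; exact_mod_cast h
      · right
        rw [h]
    · exfalso
      have h5 : N₁.natAbs * N₂.natAbs = p ^ 2 := by
        have := congrArg Int.natAbs hNN
        rwa [Int.natAbs_mul, Int.natAbs_pow, Int.natAbs_natCast] at this
      have h6 : N₂.natAbs = 1 := by
        rw [hieq] at h5
        have hppow : 0 < p ^ 2 := by positivity
        exact Nat.eq_of_mul_eq_mul_left hppow (by rw [mul_one]; exact h5)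
      have h7 : N₂ = 1 ∨ N₂ = -1 := by
        rcases Int.natAbs_eq N₂ with h | h <;> rw [h6] at h <;> simp at h <;> [left; right] <;>
          omega
      rcases h7 with h | h
      · exact hyunit 1 h (Or.inl rfl)
      · exact hyunit (-1) h (Or.inr rfl)
  -- extract integer coefficients
  have hQ : (m : ℚ) * (2 * b) ^ 2 = ((A₁ ^ 2 - 4 * N₁ : ℤ) : ℚ) := by
    push_cast
    linear_combination (-(A₁ + 2 * a)) * hA₁ + 4 * hN₁
  obtain ⟨B, hB⟩ := sqf_rat_int hsf (2 * b) (A₁ ^ 2 - 4 * N₁) hQ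
  have hABN : A₁ ^ 2 - (m : ℤ) * B ^ 2 = 4 * N₁ := by
    have h0 : ((A₁ ^ 2 - (m : ℤ) * B ^ 2 : ℤ) : ℚ) = ((4 * N₁ : ℤ) : ℚ) := by
      push_cast
      rw [hB]
      linear_combination (A₁ + 2 * a) * hA₁ - 4 * hN₁
    exact_mod_cast h0
  -- parity: m ≡ 3 mod 4
  obtain ⟨j, hj⟩ : ∃ j : ℤ, (m : ℤ) = 4 * j + 3 := by
    have hkodd : Odd k := by
      rw [hkdef]
      refine Odd.mul ⟨(n : ℤ), by ring⟩ ?_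
      rw [Int.odd_iff]
      omega
    obtain ⟨j₀, hj₀⟩ := hkodd
    refine ⟨j₀ ^ 2 + j₀ - 1, ?_⟩
    rw [hm, hj₀]; ring
  have heven : (2 : ℤ) ∣ A₁ ∧ (2 : ℤ) ∣ B := by
    rcases Int.even_or_odd A₁ with ⟨u, hu⟩ | ⟨u, hu⟩ <;>
      rcases Int.even_or_odd B with ⟨v, hv⟩ | ⟨v, hv⟩
    · exact ⟨⟨u, by linarith⟩, ⟨v, by linarith⟩⟩
    · exfalso
      have hw : (m : ℤ) = 4 * (u * u - N₁ - (m : ℤ) * v ^ 2 - (m : ℤ) * v) := by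
        subst hu hv; linear_combination -hABN
      omega
    · exfalso
      have hw : (1 : ℤ) = 4 * (N₁ - u ^ 2 - u + (m : ℤ) * v ^ 2) := by
        subst hu hv; linear_combination hABN
      omega
    · exfalso
      have hw : (1 : ℤ) - (m : ℤ) = 4 * (N₁ - u ^ 2 - u + (m : ℤ) * v ^ 2 + (m : ℤ) * v) := by
        subst hu hv; linear_combination hABN
      omega
  obtain ⟨⟨a₀, ha₀⟩, ⟨b₀, hb₀⟩⟩ := heven
  have hfin : a₀ ^ 2 - (k ^ 2 - 2) * b₀ ^ 2 = N₁ := by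
    have h4 : 4 * (a₀ ^ 2 - (k ^ 2 - 2) * b₀ ^ 2) = 4 * N₁ := by
      rw [← hm]
      linear_combination hABN - (A₁ + 2 * a₀) * ha₀ + (m : ℤ) * (B + 2 * b₀) * hb₀
    linarith
  have hdio := dio_aux p k (Int.prime_iff_natAbs_prime.2 (by simpa using hp)) (by linarith) (by omega) hk3 b₀.natAbs b₀ a₀
  rcases hN₁sign with hs | hs
  · exact hdio 1 le_rfl (Or.inl rfl) (by rw [hfin, hs]; ring)
  · exact hdio (-1) le_rfl (Or.inr rfl) (by rw [hfin, hs]; ring)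
end
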